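/- arXiv:1112.0638 — 5 statements merged into one kernel-verified Lean document; each statement's English description precedes it below -/
import Mathlib

section
/- Schur-Weyl duality, second direction: for all d, n ≥ 1, the unital ℂ-subalgebra generated by {V^{⊗n} : V ∈ U(d)} inside the algebra of matrices on (ℂ^d)^{⊗n} equals the commutant of the set of permutation operators {P(σ) : σ a permutation of Fin n}. -/
/- Schur-Weyl duality, second direction:
the unital ℂ-subalgebra generated by {V^{⊗n} : V ∈ U(d)} inside the algebra of
matrices on (ℂ^d)^{⊗n} equals the commutant of the permutation operators. -/

open Matrix

noncomputable section

/-- Matrices on the n-fold tensor power (ℂ^d)^{⊗n}. -/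
abbrev MatN (d n : ℕ) := Matrix (Fin n → Fin d) (Fin n → Fin d) ℂ

/-- The n-fold tensor power V^{⊗n} of a matrix V on ℂ^d. -/
def tpow (d n : ℕ) (V : Matrix (Fin d) (Fin d) ℂ) : MatN d n :=
  Matrix.of fun x y => ∏ i, V (x i) (y i)

/-- The permutation operator P(σ) on (ℂ^d)^{⊗n}. -/
def permMat (d n : ℕ) (σ : Equiv.Perm (Fin n)) : MatN d n :=
  Matrix.of fun x y => if x = y ∘ ⇑σ⁻¹ then 1 else 0


section SchurWeylAux
open Finset

variable {d n : ℕ}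

lemma permMat_mul (σ : Equiv.Perm (Fin n)) (X : MatN d n) :
    permMat d n σ * X = Matrix.of fun x y => X (x ∘ σ) y := by
  ext x y
  have key : ∀ z : Fin n → Fin d, (x = z ∘ ⇑σ⁻¹) ↔ (x ∘ ⇑σ = z) := by
    intro z
    constructor
    · rintro rfl; funext i; simp
    · rintro rfl; funext i; simp
  simp only [mul_apply, permMat, of_apply, ite_mul, one_mul, zero_mul]
  simp only [key]
  rw [Finset.sum_ite_eq Finset.univ (x ∘ ⇑σ) (fun z => X z y)]
  simp

lemma mul_permMat (σ : Equiv.Perm (Fin n)) (X : MatN d n) :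
    X * permMat d n σ = Matrix.of fun x y => X x (y ∘ ⇑σ⁻¹) := by
  ext x y
  simp only [mul_apply, permMat, of_apply, mul_ite, mul_one, mul_zero]
  rw [Finset.sum_ite_eq' Finset.univ (y ∘ ⇑σ⁻¹) (fun z => X x z)]
  simp

lemma tpow_comm_perm (σ : Equiv.Perm (Fin n)) (V : Matrix (Fin d) (Fin d) ℂ) :
    permMat d n σ * tpow d n V = tpow d n V * permMat d n σ := by
  rw [permMat_mul, mul_permMat]
  ext x y
  simp only [of_apply, tpow, Function.comp_apply]
  exact Fintype.prod_equiv σ _ _ (fun i => by simp)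

lemma invariance {X : MatN d n}
    (h : ∀ σ : Equiv.Perm (Fin n), permMat d n σ * X = X * permMat d n σ)
    (σ : Equiv.Perm (Fin n)) (x y : Fin n → Fin d) :
    X (x ∘ σ) (y ∘ σ) = X x y := by
  have h2 : (Matrix.of fun x y => X (x ∘ σ) y) = Matrix.of fun x y => X x (y ∘ ⇑σ⁻¹) :=
    (permMat_mul σ X).symm.trans ((h σ).trans (mul_permMat σ X))
  have h3 := congrFun (congrFun (congrArg (fun M => Matrix.of.symm M) h2) x) (y ∘ σ)
  simp only [Equiv.symm_apply_apply] at h3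
  have h4 : (y ∘ ⇑σ) ∘ ⇑σ⁻¹ = y := by funext i; simp
  rw [h4] at h3
  exact h3

lemma sum_powerset_neg_one_pow_card_C {α : Type*} [DecidableEq α] (x : Finset α) :
    (∑ m ∈ x.powerset, (-1 : ℂ) ^ m.card) = if x = ∅ then 1 else 0 := by
  have := Finset.sum_powerset_neg_one_pow_card (x := x)
  have h2 := congrArg (fun z : ℤ => (z : ℂ)) this
  push_cast at h2
  rw [h2]

lemma ie {n : ℕ} (g : Fin n → Fin n) :
    ∑ S : Finset (Fin n), (-1:ℂ)^(n - S.card) * (if (∀ i, g i ∈ S) then (1:ℂ) else 0)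
      = if Function.Surjective g then 1 else 0 := by
  classical
  set T : Finset (Fin n) := Finset.image g Finset.univ with hT
  have hcond : ∀ S : Finset (Fin n), (∀ i, g i ∈ S) ↔ T ⊆ S := by
    intro S
    rw [hT, Finset.image_subset_iff]
    simp
  have hsurj : Function.Surjective g ↔ T = Finset.univ := by
    constructor
    · intro hs
      apply Finset.eq_univ_iff_forall.2
      intro j
      obtain ⟨i, rfl⟩ := hs j
      simp [hT]
    · intro hTu j
      have : j ∈ T := hTu ▸ Finset.mem_univ j
      simp only [hT, Finset.mem_image] at this
      obtain ⟨i, _, hi⟩ := this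
      exact ⟨i, hi⟩
  simp only [hcond]
  -- reindex by complement
  rw [show (∑ S : Finset (Fin n), (-1:ℂ)^(n - S.card) * (if T ⊆ S then (1:ℂ) else 0))
      = ∑ R : Finset (Fin n), (-1:ℂ)^(n - Rᶜ.card) * (if T ⊆ Rᶜ then (1:ℂ) else 0) from
    Fintype.sum_equiv (Function.Involutive.toPerm _ (compl_compl (α := Finset (Fin n)))) _ _ (fun S => by simp [Function.Involutive.toPerm])]
  have hc : ∀ R : Finset (Fin n), n - Rᶜ.card = R.card := by
    intro R
    rw [Finset.card_compl, Fintype.card_fin]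
    exact Nat.sub_sub_self (by simpa using Finset.card_le_univ R)
  have hsub : ∀ R : Finset (Fin n), (T ⊆ Rᶜ) ↔ (R ⊆ Tᶜ) := fun R => Finset.subset_compl_comm
  simp only [hc, hsub, mul_ite, mul_one, mul_zero]
  rw [Finset.sum_ite, Finset.sum_const_zero, add_zero]
  have hfilt : Finset.univ.filter (fun R : Finset (Fin n) => R ⊆ Tᶜ) = Tᶜ.powerset := by
    ext R; simp [Finset.mem_powerset]
  rw [hfilt, sum_powerset_neg_one_pow_card_C]
  have : (Tᶜ = ∅) ↔ (T = Finset.univ) := by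
    constructor
    · intro h
      have := congrArg Compl.compl h
      rwa [compl_compl, Finset.compl_empty] at this
    · intro h
      rw [h, Finset.compl_univ]
  simp only [this, hsurj]

lemma polar_scalar {n : ℕ} (c : Fin n → Fin n → ℂ) :
    ∑ σ : Equiv.Perm (Fin n), ∏ i, c (σ i) i
      = ∑ S : Finset (Fin n), (-1:ℂ)^(n - S.card) * ∏ i, ∑ j ∈ S, c j i := by
  classical
  have expand : ∀ S : Finset (Fin n), (∏ i, ∑ j ∈ S, c j i)
      = ∑ g : Fin n → Fin n, if (∀ i, g i ∈ S) then ∏ i, c (g i) i else 0 := by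
    intro S
    rw [Finset.prod_univ_sum (fun _ => S) (fun i j => c j i)]
    rw [show (∑ g : Fin n → Fin n, if (∀ i, g i ∈ S) then ∏ i, c (g i) i else 0)
        = ∑ g ∈ Finset.univ.filter (fun g : Fin n → Fin n => ∀ i, g i ∈ S), ∏ i, c (g i) i from
      (Finset.sum_filter _ _).symm]
    congr 1
    ext g
    simp [Fintype.mem_piFinset]
  simp only [expand, Finset.mul_sum]
  rw [Finset.sum_comm]
  have inner : ∀ g : Fin n → Fin n,
      (∑ S : Finset (Fin n), (-1:ℂ)^(n - S.card) * if (∀ i, g i ∈ S) then ∏ i, c (g i) i else 0)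
      = (∏ i, c (g i) i) * (if Function.Surjective g then 1 else 0) := by
    intro g
    rw [← ie g, Finset.mul_sum]
    congr 1
    funext S
    split <;> ring
  simp only [inner]
  simp only [mul_ite, mul_one, mul_zero]
  rw [← Finset.sum_filter]
  exact (Finset.sum_bij (fun (σ : Equiv.Perm (Fin n)) _ => (σ : Fin n → Fin n))
    (fun σ _ => by simp [σ.surjective])
    (fun a _ b _ h => Equiv.coe_fn_injective h)
    (fun g hg => ⟨Equiv.ofBijective g (Finite.surjective_iff_bijective.mp (by simpa using hg)),
      Finset.mem_univ _, rfl⟩)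
    (fun σ _ => rfl))

def mtensor (d n : ℕ) (B : Fin n → Matrix (Fin d) (Fin d) ℂ) : MatN d n :=
  Matrix.of fun x y => ∏ i, B i (x i) (y i)

lemma polar (B : Fin n → Matrix (Fin d) (Fin d) ℂ) :
    ∑ σ : Equiv.Perm (Fin n), mtensor d n (fun i => B (σ i))
      = ∑ S : Finset (Fin n), ((-1:ℂ)^(n - S.card)) • tpow d n (∑ i ∈ S, B i) := by
  ext x y
  simp only [Finset.sum_apply, Matrix.sum_apply, Matrix.smul_apply, mtensor, tpow, of_apply,
    smul_eq_mul]
  have := polar_scalar (fun j i => B j (x i) (y i))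
  convert this using 2 with S

lemma mtensor_std (x y : Fin n → Fin d) :
    mtensor d n (fun i => single (x i) (y i) (1:ℂ)) = single x y 1 := by
  ext a b
  simp only [mtensor, of_apply, single]
  rw [Finset.prod_boole]
  congr 1
  simp only [Finset.mem_univ, true_implies, eq_iff_iff]
  rw [funext_iff (f := x), funext_iff (f := y)]
  constructor
  · intro h; exact ⟨fun i => (h i).1, fun i => (h i).2⟩
  · intro h i; exact ⟨h.1 i, h.2 i⟩

lemma sym_mem (B : Fin n → Matrix (Fin d) (Fin d) ℂ) :
    (∑ σ : Equiv.Perm (Fin n), mtensor d n (fun i => B (σ i)))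
      ∈ Submodule.span ℂ (Set.range (tpow d n)) := by
  rw [polar]
  exact Submodule.sum_mem _ fun S _ =>
    Submodule.smul_mem _ _ (Submodule.subset_span ⟨_, rfl⟩)

/-- composition-with-σ as an equiv on index functions -/
def ce (σ : Equiv.Perm (Fin n)) : (Fin n → Fin d) ≃ (Fin n → Fin d) :=
  Equiv.arrowCongr σ⁻¹ (Equiv.refl (Fin d))

lemma ce_apply (σ : Equiv.Perm (Fin n)) (x : Fin n → Fin d) : ce σ x = x ∘ σ := by
  funext i; simp [ce, Equiv.arrowCongr, Equiv.Perm.inv_def]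

set_option maxHeartbeats 1000000 in
lemma comm_mem_span {X : MatN d n}
    (hinv : ∀ (σ : Equiv.Perm (Fin n)) (x y : Fin n → Fin d), X (x ∘ σ) (y ∘ σ) = X x y) :
    X ∈ Submodule.span ℂ (Set.range (tpow d n)) := by
  classical
  have key : ∀ σ : Equiv.Perm (Fin n),
      (∑ x : Fin n → Fin d, ∑ y : Fin n → Fin d,
        X x y • single (x ∘ σ) (y ∘ σ) (1:ℂ)) = X := by
    intro σ
    have step : (∑ x : Fin n → Fin d, ∑ y : Fin n → Fin d,
          X x y • single (x ∘ σ) (y ∘ σ) (1:ℂ))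
        = ∑ x : Fin n → Fin d, ∑ y : Fin n → Fin d, X x y • single x y (1:ℂ) := by
      refine Fintype.sum_equiv (ce σ) _ _ (fun x => ?_)
      refine Fintype.sum_equiv (ce σ) _ _ (fun y => ?_)
      rw [ce_apply, ce_apply, hinv σ x y]
    rw [step]
    have := matrix_eq_sum_single X
    simp only [smul_single, smul_eq_mul, mul_one]
    exact this.symm
  have htot : (∑ σ : Equiv.Perm (Fin n), ∑ x : Fin n → Fin d, ∑ y : Fin n → Fin d,
      X x y • single (x ∘ σ) (y ∘ σ) (1:ℂ)) = (n.factorial : ℂ) • X := by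
    rw [Finset.sum_congr rfl (fun σ _ => key σ), Finset.sum_const, Finset.card_univ,
      Fintype.card_perm, Fintype.card_fin]
    simp [Nat.cast_smul_eq_nsmul ℂ]
  have hX : X = ((n.factorial : ℂ))⁻¹ • (∑ σ : Equiv.Perm (Fin n), ∑ x : Fin n → Fin d,
      ∑ y : Fin n → Fin d, X x y • single (x ∘ σ) (y ∘ σ) (1:ℂ)) := by
    rw [htot, smul_smul, inv_mul_cancel₀ (by exact_mod_cast n.factorial_ne_zero), one_smul]
  rw [hX]
  refine Submodule.smul_mem _ _ ?_
  rw [Finset.sum_comm]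
  refine Submodule.sum_mem _ fun x _ => ?_
  rw [Finset.sum_comm]
  refine Submodule.sum_mem _ fun y _ => ?_
  have : (∑ σ : Equiv.Perm (Fin n), X x y • single (x ∘ σ) (y ∘ σ) (1:ℂ))
      = X x y • ∑ σ : Equiv.Perm (Fin n),
          mtensor d n (fun i => (fun j => single (x j) (y j) (1:ℂ)) (σ i)) := by
    rw [Finset.smul_sum]
    refine Finset.sum_congr rfl fun σ _ => ?_
    congr 1
    exact (mtensor_std (x ∘ σ) (y ∘ σ)).symm
  rw [this]
  exact Submodule.smul_mem _ _ (sym_mem (fun j => single (x j) (y j) 1))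

lemma exists_poly (ψ : Module.Dual ℂ (MatN d n)) (A B : Matrix (Fin d) (Fin d) ℂ) :
    ∃ P : Polynomial ℂ, ∀ z : ℂ, P.eval z = ψ (tpow d n (A + z • B)) := by
  classical
  refine ⟨∑ x : Fin n → Fin d, ∑ y : Fin n → Fin d,
    Polynomial.C (ψ (single x y 1)) *
      ∏ i, (Polynomial.C (A (x i) (y i)) + Polynomial.C (B (x i) (y i)) * Polynomial.X), ?_⟩
  intro z
  have hM : tpow d n (A + z • B) = ∑ x : Fin n → Fin d, ∑ y : Fin n → Fin d,
      (tpow d n (A + z • B) x y) • single x y (1:ℂ) := by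
    have := matrix_eq_sum_single (tpow d n (A + z • B))
    simp only [smul_single, smul_eq_mul, mul_one]
    exact this
  rw [hM, map_sum]
  simp only [map_sum, _root_.map_smul, smul_eq_mul]
  rw [Polynomial.eval_finset_sum]
  refine Finset.sum_congr rfl fun x _ => ?_
  rw [Polynomial.eval_finset_sum]
  refine Finset.sum_congr rfl fun y _ => ?_
  simp only [Polynomial.eval_mul, Polynomial.eval_C, Polynomial.eval_prod, Polynomial.eval_add,
    Polynomial.eval_X]
  rw [mul_comm]
  congr 1
  simp only [tpow, of_apply, Matrix.add_apply, Matrix.smul_apply, smul_eq_mul]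
  exact Finset.prod_congr rfl fun i _ => by ring

lemma circle_infinite : {z : ℂ | ‖z‖ = 1}.Infinite := by
  apply Set.infinite_of_injective_forall_mem
    (f := fun k : ℕ => Complex.exp ((1/((k:ℝ)+1) : ℝ) * Complex.I))
  · intro a b hab
    simp only at hab
    rw [Complex.exp_eq_exp_iff_exists_int] at hab
    obtain ⟨m, hm⟩ := hab
    set ra : ℝ := 1/((a:ℝ)+1) with hra
    set rb : ℝ := 1/((b:ℝ)+1) with hrb
    have hm' : ((ra : ℝ) : ℂ) = ((rb : ℝ) : ℂ) + (m:ℂ) * (2*(Real.pi:ℂ)) :=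
      mul_right_cancel₀ Complex.I_ne_zero (by rw [hm]; ring)
    have him : ra = rb + (m:ℝ) * (2*Real.pi) := by
      have := congrArg Complex.re hm'
      simpa [Complex.add_re, Complex.mul_re] using this
    have hpa : (0:ℝ) < (a:ℝ)+1 := by positivity
    have hpb : (0:ℝ) < (b:ℝ)+1 := by positivity
    have hra1 : ra ≤ 1 := by
      rw [hra, div_le_one hpa]; have := Nat.cast_nonneg (α := ℝ) a; linarith
    have hrb1 : rb ≤ 1 := by
      rw [hrb, div_le_one hpb]; have := Nat.cast_nonneg (α := ℝ) b; linarith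
    have hra0 : (0:ℝ) < ra := by rw [hra]; positivity
    have hrb0 : (0:ℝ) < rb := by rw [hrb]; positivity
    have hπ := Real.pi_gt_three
    have hm0 : m = 0 := by
      rcases lt_trichotomy m 0 with hneg | hz | hpos
      · exfalso
        have : (m:ℝ) ≤ -1 := by exact_mod_cast Int.le_sub_one_of_lt hneg
        nlinarith
      · exact hz
      · exfalso
        have : (1:ℝ) ≤ (m:ℝ) := by exact_mod_cast hpos
        nlinarith
    rw [hm0] at him
    simp only [Int.cast_zero, zero_mul, add_zero] at him
    have hab' : ((a:ℝ)+1)⁻¹ = ((b:ℝ)+1)⁻¹ := by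
      rw [hra, hrb] at him
      simpa [one_div] using him
    have : (a:ℝ) + 1 = (b:ℝ) + 1 := inv_injective hab'
    have : (a:ℝ) = (b:ℝ) := by linarith
    exact_mod_cast this
  · intro k
    simp only [Set.mem_setOf_eq, Complex.norm_exp]
    rw [show (((1/((k:ℝ)+1) : ℝ)) * Complex.I).re = 0 by simp]
    exact Real.exp_zero

lemma diag_unitary (w : Fin d → ℂ) (hw : ∀ i, ‖w i‖ = 1) :
    diagonal w ∈ Matrix.unitaryGroup (Fin d) ℂ := by
  rw [Matrix.mem_unitaryGroup_iff']
  rw [Matrix.star_eq_conjTranspose, Matrix.diagonal_conjTranspose, Matrix.diagonal_mul_diagonal]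
  rw [show (fun i => star w i * w i) = fun _ => (1:ℂ) from funext fun i => by
    simp only [Pi.star_apply, Complex.star_def]
    rw [← Complex.normSq_eq_conj_mul_self, Complex.normSq_eq_norm_sq, hw i]
    norm_num, Matrix.diagonal_one]

lemma kill_diag (ψ : Module.Dual ℂ (MatN d n))
    (hψ : ∀ V ∈ Matrix.unitaryGroup (Fin d) ℂ, ψ (tpow d n V) = 0)
    (U V : Matrix (Fin d) (Fin d) ℂ) (hU : U ∈ Matrix.unitaryGroup (Fin d) ℂ)
    (hV : V ∈ Matrix.unitaryGroup (Fin d) ℂ) (w : Fin d → ℂ) :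
    ψ (tpow d n (U * diagonal w * V)) = 0 := by
  suffices h : ∀ k : ℕ, ∀ w : Fin d → ℂ, (∀ i : Fin d, k ≤ (i:ℕ) → ‖w i‖ = 1) →
      ψ (tpow d n (U * diagonal w * V)) = 0 by
    exact h d w (fun i hi => absurd i.isLt (by omega))
  intro k
  induction k with
  | zero =>
    intro w hw
    have hdw : diagonal w ∈ Matrix.unitaryGroup (Fin d) ℂ :=
      diag_unitary w (fun i => hw i (Nat.zero_le _))
    exact hψ _ (mul_mem (mul_mem hU hdw) hV)
  | succ k ih =>
    intro w hw
    by_cases hkd : k < d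
    · set κ : Fin d := ⟨k, hkd⟩ with hκ
      set A := U * diagonal (Function.update w κ 0) * V with hA
      set B := U * diagonal (Pi.single κ (1:ℂ)) * V with hB
      have hdiag : ∀ z : ℂ, diagonal (Function.update w κ z)
          = diagonal (Function.update w κ 0) + z • diagonal (Pi.single κ 1) := by
        intro z
        ext i j
        by_cases hij : i = j
        · subst hij
          by_cases hi : i = κ <;>
            simp [Matrix.diagonal_apply_eq, Matrix.smul_apply, hi, Pi.single_apply]
        · simp [Matrix.diagonal_apply_ne _ hij, Matrix.smul_apply]
      have hcurve : ∀ z : ℂ, U * diagonal (Function.update w κ z) * V = A + z • B := by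
        intro z
        rw [hdiag z, Matrix.mul_add, Matrix.add_mul, hA, hB, mul_smul_comm, smul_mul_assoc]
      obtain ⟨P, hP⟩ := exists_poly ψ A B
      have hroots : ∀ z : ℂ, ‖z‖ = 1 → P.IsRoot z := by
        intro z hz
        have := ih (Function.update w κ z) (fun i hik => by
          rcases eq_or_ne i κ with rfl | hne
          · simpa using hz
          · rw [Function.update_of_ne hne]
            apply hw
            have : (i:ℕ) ≠ k := fun hh => hne (Fin.ext hh)
            omega)
        rw [hcurve z] at this
        rw [Polynomial.IsRoot, hP z]
        exact this
      have hP0 : P = 0 := Polynomial.eq_zero_of_infinite_isRoot P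
        (circle_infinite.mono (fun z hz => hroots z hz))
      have hfin := hP (w κ)
      rw [hP0, Polynomial.eval_zero] at hfin
      rw [← hcurve (w κ), Function.update_eq_self] at hfin
      exact hfin.symm
    · exact ih w (fun i hi => absurd i.isLt (by omega))

lemma kill_herm (ψ : Module.Dual ℂ (MatN d n))
    (hψ : ∀ V ∈ Matrix.unitaryGroup (Fin d) ℂ, ψ (tpow d n V) = 0)
    (H : Matrix (Fin d) (Fin d) ℂ) (hH : H.IsHermitian) : ψ (tpow d n H) = 0 := by
  have hst := hH.spectral_theorem
  rw [show tpow d n H = tpow d n ((hH.eigenvectorUnitary : Matrix (Fin d) (Fin d) ℂ) *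
      diagonal (RCLike.ofReal ∘ hH.eigenvalues) *
      (star (hH.eigenvectorUnitary : Matrix (Fin d) (Fin d) ℂ))) from congrArg _ hst]
  exact kill_diag ψ hψ _ _ (SetLike.coe_mem _) (Unitary.star_mem (SetLike.coe_mem _)) _

lemma kill_all (ψ : Module.Dual ℂ (MatN d n))
    (hψ : ∀ V ∈ Matrix.unitaryGroup (Fin d) ℂ, ψ (tpow d n V) = 0)
    (A : Matrix (Fin d) (Fin d) ℂ) : ψ (tpow d n A) = 0 := by
  set H := (1/2 : ℂ) • (A + Aᴴ) with hHdef
  set K := (-(Complex.I/2)) • (A - Aᴴ) with hKdef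
  have hH : H.IsHermitian := by
    rw [Matrix.IsHermitian, hHdef, Matrix.conjTranspose_smul, Matrix.conjTranspose_add,
      Matrix.conjTranspose_conjTranspose]
    rw [show star (1/2 : ℂ) = 1/2 by simp [Complex.star_def]]
    rw [add_comm]
  have hK : K.IsHermitian := by
    rw [Matrix.IsHermitian, hKdef, Matrix.conjTranspose_smul, Matrix.conjTranspose_sub,
      Matrix.conjTranspose_conjTranspose]
    rw [show star (-(Complex.I/2)) = Complex.I/2 by simp [Complex.star_def]; ring]
    rw [neg_smul, ← smul_neg, neg_sub]
  have hsum : ∀ t : ℝ, (H + (t:ℂ) • K).IsHermitian := by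
    intro t
    refine hH.add ?_
    rw [Matrix.IsHermitian, Matrix.conjTranspose_smul, hK.eq,
      show star ((t:ℝ):ℂ) = ((t:ℝ):ℂ) from by simp [Complex.star_def, Complex.conj_ofReal]]
  obtain ⟨P, hP⟩ := exists_poly ψ H K
  have hroots : ∀ t : ℝ, P.IsRoot ((t:ℝ):ℂ) := fun t => by
    rw [Polynomial.IsRoot, hP]
    exact kill_herm ψ hψ _ (hsum t)
  have hinf : {x : ℂ | P.IsRoot x}.Infinite := by
    refine Set.Infinite.mono ?_ (Set.infinite_range_of_injective Complex.ofReal_injective)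
    rintro _ ⟨t, rfl⟩
    exact hroots t
  have hP0 := Polynomial.eq_zero_of_infinite_isRoot P hinf
  have hfin := hP Complex.I
  rw [hP0, Polynomial.eval_zero] at hfin
  have hHK : H + Complex.I • K = A := by
    rw [hHdef, hKdef, smul_smul,
      show Complex.I * -(Complex.I/2) = 1/2 from by
        rw [mul_neg, ← mul_div_assoc, Complex.I_mul_I]; norm_num]
    module
  rw [hHK] at hfin
  exact hfin.symm

lemma tpow_mem_span (A : Matrix (Fin d) (Fin d) ℂ) :
    tpow d n A ∈ Submodule.span ℂ
      {M : MatN d n | ∃ V ∈ Matrix.unitaryGroup (Fin d) ℂ, M = tpow d n V} := by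
  set W := Submodule.span ℂ
      {M : MatN d n | ∃ V ∈ Matrix.unitaryGroup (Fin d) ℂ, M = tpow d n V} with hW
  refine (Submodule.Quotient.mk_eq_zero W).mp ?_
  rw [← Module.forall_dual_apply_eq_zero_iff ℂ]
  intro φ
  have := kill_all (φ.comp W.mkQ) (fun V hV => by
    have hmem : tpow d n V ∈ W := Submodule.subset_span ⟨V, hV, rfl⟩
    simp only [LinearMap.comp_apply, Submodule.mkQ_apply,
      (Submodule.Quotient.mk_eq_zero W).mpr hmem, map_zero]) A
  simpa using this

theorem schur_weyl_second_direction (d n : ℕ) (hd : 1 ≤ d) (hn : 1 ≤ n) :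
    (Algebra.adjoin ℂ
        {M : MatN d n | ∃ V ∈ Matrix.unitaryGroup (Fin d) ℂ, M = tpow d n V}
      : Set (MatN d n))
      = {X : MatN d n | ∀ σ : Equiv.Perm (Fin n),
          permMat d n σ * X = X * permMat d n σ} := by
  apply Set.eq_of_subset_of_subset
  · intro X hX
    have hle : Algebra.adjoin ℂ
        {M : MatN d n | ∃ V ∈ Matrix.unitaryGroup (Fin d) ℂ, M = tpow d n V}
        ≤ Subalgebra.centralizer ℂ
          {M : MatN d n | ∃ σ : Equiv.Perm (Fin n), M = permMat d n σ} := by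
      rw [Algebra.adjoin_le_iff]
      rintro M ⟨V, hV, rfl⟩
      rw [SetLike.mem_coe, Subalgebra.mem_centralizer_iff]
      rintro g ⟨σ, rfl⟩
      exact tpow_comm_perm σ V
    intro σ
    have hc := hle hX
    rw [Subalgebra.mem_centralizer_iff] at hc
    exact hc _ ⟨σ, rfl⟩
  · intro X hX
    have hs := comm_mem_span (fun σ x y => invariance hX σ x y)
    have hW : Submodule.span ℂ (Set.range (tpow d n))
        ≤ Subalgebra.toSubmodule (Algebra.adjoin ℂ
          {M : MatN d n | ∃ V ∈ Matrix.unitaryGroup (Fin d) ℂ, M = tpow d n V}) := by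
      rw [Submodule.span_le]
      rintro _ ⟨A, rfl⟩
      have h2 : Submodule.span ℂ
          {M : MatN d n | ∃ V ∈ Matrix.unitaryGroup (Fin d) ℂ, M = tpow d n V}
          ≤ Subalgebra.toSubmodule (Algebra.adjoin ℂ
            {M : MatN d n | ∃ V ∈ Matrix.unitaryGroup (Fin d) ℂ, M = tpow d n V}) := by
        rw [Submodule.span_le]
        exact Algebra.subset_adjoin
      exact h2 (tpow_mem_span A)
    exact hW hs
end SchurWeylAux
end
end

section
/- Let H be any subgroup of U(d) and let H' be its centralizer in U(d). Then the intersection of the commutant of H^{×n} with the commutant of the permutation operators {P(σ) : σ a permutation of Fin n}, inside the algebra of matrices on (ℂ^d)^{⊗n}, equals the unital ℂ-subalgebra generated by Q(H') = {V^{⊗n} : V ∈ H'}; that is, the permutationally invariant subalgebra of Comm(H^{×n}) equals Alg(Q(H')). -/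
/- For any subgroup H of U(d) with centralizer H', the permutationally invariant
part of the commutant of H^{×n} equals the unital ℂ-subalgebra generated by
Q(H') = {V^{⊗n} : V ∈ H'}. -/

open Matrix

noncomputable section

/-- The tensor product V₁ ⊗ ⋯ ⊗ Vₙ of n matrices on ℂ^d. -/
def tensProd (d n : ℕ) (V : Fin n → Matrix (Fin d) (Fin d) ℂ) : MatN d n :=
  Matrix.of fun x y => ∏ i, V i (x i) (y i)

/-- Q(G) : the collective action {V^{⊗n} : V ∈ G}. -/
def Qset (d n : ℕ) (G : Subgroup (Matrix.unitaryGroup (Fin d) ℂ)) : Set (MatN d n) :=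
  {M | ∃ V ∈ G, M = tpow d n ((V : Matrix.unitaryGroup (Fin d) ℂ) : Matrix (Fin d) (Fin d) ℂ)}

/-- H^{×n} : the set of tensor products V₁ ⊗ ⋯ ⊗ Vₙ with each Vᵢ ∈ H. -/
def groupTensorSet (d n : ℕ) (H : Subgroup (Matrix.unitaryGroup (Fin d) ℂ)) :
    Set (MatN d n) :=
  {W | ∃ V : Fin n → H,
    W = tensProd d n fun i => ((V i : Matrix.unitaryGroup (Fin d) ℂ) : Matrix (Fin d) (Fin d) ℂ)}


namespace PIC

open scoped ComplexOrder

variable {d n : ℕ}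

abbrev Md (d : ℕ) := Matrix (Fin d) (Fin d) ℂ

lemma tensProd_apply (M : Fin n → Md d) (x y : Fin n → Fin d) :
    tensProd d n M x y = ∏ i, M i (x i) (y i) := rfl

lemma tpow_eq_tensProd (V : Md d) : tpow d n V = tensProd d n (fun _ => V) := rfl

lemma tensProd_mul (M N : Fin n → Md d) :
    tensProd d n M * tensProd d n N = tensProd d n (fun i => M i * N i) := by
  ext x y
  simp only [mul_apply, tensProd_apply, Matrix.mul_apply]
  rw [Finset.prod_univ_sum, Fintype.piFinset_univ]
  exact Finset.sum_congr rfl fun z _ => by rw [← Finset.prod_mul_distrib]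

lemma tpow_mul (V W : Md d) : tpow d n V * tpow d n W = tpow d n (V * W) := by
  rw [tpow_eq_tensProd, tpow_eq_tensProd, tensProd_mul]; rfl

lemma permMat_mul_apply (σ : Equiv.Perm (Fin n)) (X : MatN d n) (x y : Fin n → Fin d) :
    (permMat d n σ * X) x y = X (x ∘ ⇑σ) y := by
  have h : ∀ z : Fin n → Fin d, (x = z ∘ ⇑σ⁻¹) ↔ (z = x ∘ ⇑σ) := by
    intro z
    constructor <;> intro h <;> subst h <;> funext i <;> simp
  simp only [mul_apply, permMat, of_apply]
  rw [Finset.sum_congr rfl (fun z _ => by rw [if_congr (h z) rfl rfl])]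
  simp only [ite_mul, one_mul, zero_mul, Finset.sum_ite_eq', Finset.mem_univ, if_true]

lemma mul_permMat_apply (σ : Equiv.Perm (Fin n)) (X : MatN d n) (x y : Fin n → Fin d) :
    (X * permMat d n σ) x y = X x (y ∘ ⇑σ⁻¹) := by
  simp only [mul_apply, permMat, of_apply]
  simp only [mul_ite, mul_one, mul_zero, Finset.sum_ite_eq', Finset.mem_univ, if_true]

lemma permMat_mul_permMat (σ τ : Equiv.Perm (Fin n)) :
    permMat d n σ * permMat d n τ = permMat d n (σ * τ) := by
  ext x y
  rw [permMat_mul_apply]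
  show (if x ∘ ⇑σ = y ∘ ⇑τ⁻¹ then (1:ℂ) else 0) = if x = y ∘ ⇑(σ * τ)⁻¹ then 1 else 0
  congr 1
  simp only [eq_iff_iff]
  constructor <;> intro h
  · funext i
    have := congrFun h (σ⁻¹ i)
    simpa using this
  · subst h
    funext i
    simp [Function.comp]
  
lemma permMat_one : permMat d n 1 = 1 := by
  ext x y
  show (if x = y ∘ ⇑(1:Equiv.Perm (Fin n))⁻¹ then (1:ℂ) else 0) = _
  simp [Matrix.one_apply, funext_iff, eq_comm]

lemma permMat_mul_tensProd (σ : Equiv.Perm (Fin n)) (M : Fin n → Md d) :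
    permMat d n σ * tensProd d n M = tensProd d n (fun i => M (σ⁻¹ i)) * permMat d n σ := by
  ext x y
  rw [permMat_mul_apply, mul_permMat_apply]
  show ∏ i, M i (x (σ i)) (y i) = ∏ i, M (σ⁻¹ i) (x i) (y (σ⁻¹ i))
  rw [← Equiv.prod_comp σ (fun i => M (σ⁻¹ i) (x i) (y (σ⁻¹ i)))]
  simp

lemma permMat_conj_tensProd (σ : Equiv.Perm (Fin n)) (M : Fin n → Md d) :
    permMat d n σ * tensProd d n M * permMat d n σ⁻¹ = tensProd d n (fun i => M (σ⁻¹ i)) := by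
  rw [permMat_mul_tensProd, mul_assoc, permMat_mul_permMat, mul_inv_cancel, permMat_one, mul_one]

/-- The i-th slice of a big matrix. -/
def slice (i : Fin n) (x y : Fin n → Fin d) (X : MatN d n) : Md d :=
  Matrix.of fun u v => X (Function.update x i u) (Function.update y i v)

/-- An operator acting on a single slot. -/
def singleSlot (i : Fin n) (a : Md d) : MatN d n :=
  tensProd d n (fun j => if j = i then a else 1)

lemma prod_singleSlot_factor (i : Fin n) (a : Md d) (x z : Fin n → Fin d) :
    ∏ j, (if j = i then a else 1) (x j) (z j)
      = a (x i) (z i) * (if Function.update x i (z i) = z then 1 else 0) := by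
  rw [← Finset.mul_prod_erase Finset.univ _ (Finset.mem_univ i)]
  simp only [if_pos rfl]
  congr 1
  have : ∀ j ∈ Finset.univ.erase i, (if j = i then a else 1) (x j) (z j)
      = if x j = z j then (1:ℂ) else 0 := by
    intro j hj
    rw [if_neg (Finset.mem_erase.mp hj).1, Matrix.one_apply]
  rw [Finset.prod_congr rfl this, Finset.prod_boole]
  congr 1
  simp only [eq_iff_iff]
  constructor <;> intro h
  · funext j
    by_cases hj : j = i
    · subst hj; simp
    · rw [Function.update_of_ne hj]
      exact h j (Finset.mem_erase.mpr ⟨hj, Finset.mem_univ j⟩)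
  · intro j hj
    have := congrFun h j
    rwa [Function.update_of_ne (Finset.mem_erase.mp hj).1] at this

lemma sum_update_eq (F : (Fin n → Fin d) → ℂ) (x : Fin n → Fin d) (i : Fin n) :
    ∑ z, (if Function.update x i (z i) = z then F z else 0)
      = ∑ u, F (Function.update x i u) := by
  have : ∀ u, F (Function.update x i u)
      = ∑ z, if z = Function.update x i u then F z else 0 := by
    intro u
    rw [Finset.sum_ite_eq' Finset.univ _ F, if_pos (Finset.mem_univ _)]
  rw [Finset.sum_congr rfl (fun u _ => this u), Finset.sum_comm]
  refine Finset.sum_congr rfl fun z _ => ?_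
  rcases eq_or_ne (Function.update x i (z i)) z with h | h
  · rw [if_pos h]
    rw [Finset.sum_eq_single (z i)]
    · rw [if_pos h.symm]
    · intro u _ hu
      rw [if_neg]
      intro hz
      apply hu
      have := (congrFun hz i).trans (Function.update_self i u x)
      exact this.symm
    · intro habs
      exact absurd (Finset.mem_univ _) habs
  · rw [if_neg h, Finset.sum_eq_zero]
    intro u _
    rw [if_neg]
    intro hz
    apply h
    have hu : u = z i := by
      have := (congrFun hz i).symm
      rwa [Function.update_self] at this
    rw [hu] at hz
    exact hz.symm

lemma singleSlot_mul_apply (i : Fin n) (a : Md d) (X : MatN d n) (x y : Fin n → Fin d) :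
    (singleSlot i a * X) x y = ∑ u, a (x i) u * X (Function.update x i u) y := by
  simp only [mul_apply, singleSlot, tensProd_apply]
  have : ∀ z, (∏ j, (if j = i then a else 1) (x j) (z j)) * X z y
      = if Function.update x i (z i) = z then a (x i) (z i) * X z y else 0 := by
    intro z
    rw [prod_singleSlot_factor]
    split_ifs <;> ring
  rw [Finset.sum_congr rfl (fun z _ => this z), sum_update_eq (fun z => a (x i) (z i) * X z y)]
  refine Finset.sum_congr rfl fun u _ => ?_
  rw [Function.update_self]

lemma mul_singleSlot_apply (i : Fin n) (a : Md d) (X : MatN d n) (x y : Fin n → Fin d) :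
    (X * singleSlot i a) x y = ∑ u, X x (Function.update y i u) * a u (y i) := by
  simp only [mul_apply, singleSlot, tensProd_apply]
  have : ∀ z, X x z * (∏ j, (if j = i then a else 1) (z j) (y j))
      = if Function.update y i (z i) = z then X x z * a (z i) (y i) else 0 := by
    intro z
    rw [prod_singleSlot_factor]
    have : (if Function.update z i (y i) = y then (1:ℂ) else 0)
        = if Function.update y i (z i) = z then 1 else 0 := by
      congr 1
      simp only [eq_iff_iff]
      constructor <;> intro h
      · funext j
        by_cases hj : j = i
        · subst hj; simp
        · rw [Function.update_of_ne hj]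
          have := congrFun h j
          rw [Function.update_of_ne hj] at this
          exact this.symm
      · funext j
        by_cases hj : j = i
        · subst hj; simp
        · rw [Function.update_of_ne hj]
          have := congrFun h j
          rw [Function.update_of_ne hj] at this
          exact this.symm
    rw [this]
    split_ifs <;> ring
  rw [Finset.sum_congr rfl (fun z _ => this z), sum_update_eq (fun z => X x z * a (z i) (y i))]
  refine Finset.sum_congr rfl fun u _ => ?_
  rw [Function.update_self]

lemma commute_singleSlot_iff (i : Fin n) (a : Md d) (X : MatN d n) :
    singleSlot i a * X = X * singleSlot i a
      ↔ ∀ x y, a * slice i x y X = slice i x y X * a := by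
  constructor
  · intro h x y
    ext u v
    have := congrFun (congrFun h (Function.update x i u)) (Function.update y i v)
    rw [singleSlot_mul_apply, mul_singleSlot_apply] at this
    simp only [Function.update_self, Function.update_idem] at this
    simpa [Matrix.mul_apply, slice] using this
  · intro h
    ext x y
    rw [singleSlot_mul_apply, mul_singleSlot_apply]
    have : (a * slice i x y X) (x i) (y i) = (slice i x y X * a) (x i) (y i) := by
      rw [h x y]
    simp only [Matrix.mul_apply] at this
    have lhs : ∀ u, a (x i) u * X (Function.update x i u) y
        = a (x i) u * slice i x y X u (y i) := by
      intro u; rw [slice]; simp [Function.update_eq_self]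
    have rhs : ∀ u, X x (Function.update y i u) * a u (y i)
        = slice i x y X (x i) u * a u (y i) := by
      intro u; rw [slice]; simp [Function.update_eq_self]
    rw [Finset.sum_congr rfl fun u _ => lhs u, Finset.sum_congr rfl fun u _ => rhs u]
    exact this

/-- Elementary tensors with all factors in a submodule `B`. -/
def tensSet (B : Submodule ℂ (Md d)) (n : ℕ) : Set (MatN d n) :=
  {T | ∃ M : Fin n → Md d, (∀ i, M i ∈ B) ∧ T = tensProd d n M}

lemma matN_decomp (X : MatN d n) :
    X = ∑ p : (Fin n → Fin d) × (Fin n → Fin d),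
      X p.1 p.2 • tensProd d n (fun i => Matrix.single (p.1 i) (p.2 i) 1) := by
  ext x y
  rw [Matrix.sum_apply]
  rw [Finset.sum_eq_single (x, y)]
  · simp [tensProd_apply, Matrix.single]
  · intro p _ hp
    simp only [Matrix.smul_apply, tensProd_apply, Matrix.single, of_apply]
    rw [Finset.prod_boole]
    rw [if_neg, smul_zero]
    intro hall
    apply hp
    have h1 : p.1 = x := funext fun i => (hall i (Finset.mem_univ i)).1
    have h2 : p.2 = y := funext fun i => (hall i (Finset.mem_univ i)).2
    exact Prod.ext h1 h2
  · intro h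
    exact absurd (Finset.mem_univ _) h

lemma slice_tensProd (i : Fin n) (x y : Fin n → Fin d) (M : Fin n → Md d) :
    slice i x y (tensProd d n M)
      = (∏ j ∈ Finset.univ.erase i, M j (x j) (y j)) • M i := by
  ext u v
  simp only [slice, of_apply, tensProd_apply, Matrix.smul_apply, smul_eq_mul]
  rw [← Finset.mul_prod_erase Finset.univ _ (Finset.mem_univ i)]
  simp only [Function.update_self]
  rw [mul_comm]
  congr 1
  refine Finset.prod_congr rfl fun j hj => ?_
  rw [Function.update_of_ne (Finset.mem_erase.mp hj).1,
    Function.update_of_ne (Finset.mem_erase.mp hj).1]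

lemma mem_span_tensSet_of_slices (B : Submodule ℂ (Md d)) (X : MatN d n)
    (hX : ∀ (i : Fin n) x y, slice i x y X ∈ B) :
    X ∈ Submodule.span ℂ (tensSet B n) := by
  classical
  obtain ⟨W, hW⟩ := Submodule.exists_isCompl B
  set π : Md d →ₗ[ℂ] Md d := B.subtype ∘ₗ (Submodule.linearProjOfIsCompl B W hW) with hπ
  have hπ1 : ∀ b ∈ B, π b = b := by
    intro b hb
    simp only [hπ, LinearMap.comp_apply, Submodule.subtype_apply]
    exact congrArg Subtype.val (Submodule.linearProjOfIsCompl_apply_left hW ⟨b, hb⟩)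
  have hπ2 : ∀ m, π m ∈ B := fun m => (Submodule.linearProjOfIsCompl B W hW m).2
  -- the slot-wise projection
  let Φ : Fin n → (MatN d n →ₗ[ℂ] MatN d n) := fun i =>
    { toFun := fun T => Matrix.of fun x y => π (slice i x y T) (x i) (y i)
      map_add' := by
        intro T S
        ext x y
        have : slice i x y (T + S) = slice i x y T + slice i x y S := by
          ext u v; simp [slice]
        simp [this]
      map_smul' := by
        intro c T
        ext x y
        have : slice i x y (c • T) = c • slice i x y T := by
          ext u v; simp [slice]
        simp [this] }
  have hΦ_fix : ∀ (i : Fin n) (T : MatN d n), (∀ x y, slice i x y T ∈ B) → Φ i T = T := by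
    intro i T hT
    ext x y
    show π (slice i x y T) (x i) (y i) = T x y
    rw [hπ1 _ (hT x y)]
    show T (Function.update x i (x i)) (Function.update y i (y i)) = T x y
    rw [Function.update_eq_self, Function.update_eq_self]
  have hΦ_tens : ∀ (i : Fin n) (M : Fin n → Md d),
      Φ i (tensProd d n M) = tensProd d n (Function.update M i (π (M i))) := by
    intro i M
    ext x y
    show π (slice i x y (tensProd d n M)) (x i) (y i) = _
    rw [slice_tensProd, π.map_smul]
    simp only [Matrix.smul_apply, smul_eq_mul, tensProd_apply]
    rw [← Finset.mul_prod_erase Finset.univ _ (Finset.mem_univ i)]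
    rw [Function.update_self, mul_comm]
    congr 1
    refine Finset.prod_congr rfl fun j hj => ?_
    rw [Function.update_of_ne (Finset.mem_erase.mp hj).1]
  -- iterate over all slots
  let K : List (Fin n) → (MatN d n →ₗ[ℂ] MatN d n) := fun L =>
    L.foldr (fun i f => (Φ i) ∘ₗ f) LinearMap.id
  have hK_fix : ∀ L : List (Fin n), K L X = X := by
    intro L
    induction L with
    | nil => rfl
    | cons i L ih =>
      show Φ i (K L X) = X
      rw [ih]
      exact hΦ_fix i X (hX i)
  have hK_tens : ∀ (L : List (Fin n)) (M : Fin n → Md d),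
      K L (tensProd d n M) = tensProd d n (fun j => if j ∈ L then π (M j) else M j) := by
    intro L M
    induction L with
    | nil => simp [K]
    | cons i L ih =>
      show Φ i (K L (tensProd d n M)) = _
      rw [ih, hΦ_tens]
      refine congrArg (tensProd d n) ?_
      funext j
      by_cases hj : j = i
      · subst hj
        rw [Function.update_self]
        have hmem : (j ∈ j :: L) := List.mem_cons_self
        rw [if_pos hmem]
        by_cases hjL : j ∈ L
        · rw [if_pos hjL, hπ1 _ (hπ2 (M j))]
        · rw [if_neg hjL]
      · rw [Function.update_of_ne hj]
        have hmem : (j ∈ i :: L) ↔ (j ∈ L) := by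
          simp [List.mem_cons, hj]
        rw [if_congr hmem rfl rfl]
  -- conclude
  have key : X = K (List.finRange n) X := (hK_fix _).symm
  rw [key, matN_decomp X, map_sum]
  refine Submodule.sum_mem _ fun p _ => ?_
  rw [LinearMap.map_smul]
  refine Submodule.smul_mem _ _ (Submodule.subset_span ?_)
  rw [hK_tens]
  refine ⟨_, fun j => ?_, rfl⟩
  rw [if_pos (List.mem_finRange j)]
  exact hπ2 _

/-- Tensor powers of elements of a submodule `B`. -/
def tpowSet (B : Submodule ℂ (Md d)) (n : ℕ) : Set (MatN d n) :=
  {T | ∃ c ∈ B, T = tpow d n c}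

lemma tpow_sum_expand (S : Finset (Fin n)) (M : Fin n → Md d) :
    tpow d n (∑ i ∈ S, M i)
      = ∑ p ∈ Fintype.piFinset (fun _ : Fin n => S), tensProd d n (fun j => M (p j)) := by
  ext x y
  rw [Matrix.sum_apply]
  show ∏ j, (∑ i ∈ S, M i) (x j) (y j) = _
  have : ∀ j : Fin n, (∑ i ∈ S, M i) (x j) (y j) = ∑ i ∈ S, M i (x j) (y j) := by
    intro j; rw [Matrix.sum_apply]
  rw [Finset.prod_congr rfl fun j _ => this j, Finset.prod_univ_sum]
  rfl

lemma incl_excl (R : Finset (Fin n)) :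
    ∑ S ∈ Finset.univ.powerset.filter (fun S => R ⊆ S), (-1:ℂ)^(n - S.card)
      = if R = Finset.univ then 1 else 0 := by
  classical
  rw [Finset.sum_nbij' (i := fun S => S \ R) (j := fun T => R ∪ T)
    (t := Rᶜ.powerset) (g := fun T => (-1:ℂ)^(n - (R.card + T.card)))]
  · have hm : Rᶜ.card = n - R.card := by
      rw [Finset.card_compl, Fintype.card_fin]
    rcases eq_or_ne R Finset.univ with hR | hR
    · subst hR
      rw [if_pos rfl]
      have : Finset.univᶜ = (∅ : Finset (Fin n)) := by simp
      rw [this]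
      simp
    · rw [if_neg hR]
      have key : ∀ T ∈ Rᶜ.powerset, (-1:ℂ)^(n - (R.card + T.card))
          = (-1:ℂ)^(Rᶜ.card) * (-1:ℂ)^(T.card) := by
        intro T hT
        have hTc : T.card ≤ Rᶜ.card := Finset.card_le_card (Finset.mem_powerset.mp hT)
        have hRc : R.card ≤ n := by
          simpa using Finset.card_le_card (Finset.subset_univ R)
        have he : n - (R.card + T.card) + T.card = Rᶜ.card := by
          rw [hm]; omega
        have := pow_add (-1:ℂ) (n - (R.card + T.card)) T.card
        rw [he] at this
        rw [this, mul_assoc, ← pow_add]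
        have h11 : (-1:ℂ)^(T.card + T.card) = 1 := by
          rw [← two_mul, pow_mul]; norm_num
        rw [h11, mul_one]
      rw [Finset.sum_congr rfl key, ← Finset.mul_sum]
      have hzc : ∑ T ∈ Rᶜ.powerset, (-1:ℂ)^(T.card)
          = ((∑ T ∈ Rᶜ.powerset, (-1:ℤ)^(T.card) : ℤ) : ℂ) := by
        push_cast; rfl
      rw [hzc, Finset.sum_powerset_neg_one_pow_card,
        if_neg (by simpa [Finset.compl_eq_empty_iff] using hR)]
      simp
  · intro S hS
    simp only [Finset.mem_filter, Finset.mem_powerset] at hS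
    simp only [Finset.mem_powerset]
    intro a ha
    simp only [Finset.mem_sdiff] at ha
    simp [ha.2]
  · intro T hT
    simp only [Finset.mem_powerset] at hT
    simp only [Finset.mem_filter, Finset.mem_powerset]
    exact ⟨Finset.subset_univ _, Finset.subset_union_left⟩
  · intro S hS
    simp only [Finset.mem_filter, Finset.mem_powerset] at hS
    exact Finset.union_sdiff_of_subset hS.2
  · intro T hT
    simp only [Finset.mem_powerset] at hT
    apply Finset.union_sdiff_cancel_left
    exact Finset.disjoint_left.mpr fun a haR haT => by
      have := hT haT
      simp at this
      exact this haR
  · intro S hS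
    simp only [Finset.mem_filter, Finset.mem_powerset] at hS
    congr 2
    have : S = R ∪ (S \ R) := (Finset.union_sdiff_of_subset hS.2).symm
    rw [Finset.card_sdiff_of_subset hS.2]
    have hRS : R.card ≤ S.card := Finset.card_le_card hS.2
    omega

lemma sum_perm_tensProd_mem (B : Submodule ℂ (Md d)) (M : Fin n → Md d) (hM : ∀ i, M i ∈ B) :
    ∑ σ : Equiv.Perm (Fin n), tensProd d n (fun i => M (σ i))
      ∈ Submodule.span ℂ (tpowSet B n) := by
  classical
  have key : ∑ S ∈ Finset.univ.powerset, (-1:ℂ)^(n - S.card) • tpow d n (∑ i ∈ S, M i)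
      = ∑ σ : Equiv.Perm (Fin n), tensProd d n (fun i => M (σ i)) := by
    have step1 : ∀ S ∈ (Finset.univ : Finset (Fin n)).powerset,
        (-1:ℂ)^(n - S.card) • tpow d n (∑ i ∈ S, M i)
        = ∑ p : Fin n → Fin n, (if Finset.image p Finset.univ ⊆ S
            then (-1:ℂ)^(n - S.card) • tensProd d n (fun j => M (p j)) else 0) := by
      intro S _
      rw [tpow_sum_expand, Finset.smul_sum]
      have hpi : Fintype.piFinset (fun _ : Fin n => S)
          = Finset.univ.filter (fun p : Fin n → Fin n => Finset.image p Finset.univ ⊆ S) := by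
        ext p
        simp [Fintype.mem_piFinset, Finset.image_subset_iff]
      rw [hpi, Finset.sum_filter]
    rw [Finset.sum_congr rfl step1, Finset.sum_comm]
    have step2 : ∀ p : Fin n → Fin n,
        ∑ S ∈ (Finset.univ : Finset (Fin n)).powerset,
          (if Finset.image p Finset.univ ⊆ S
            then (-1:ℂ)^(n - S.card) • tensProd d n (fun j => M (p j)) else 0)
        = (if Finset.image p Finset.univ = Finset.univ then (1:ℂ) else 0)
            • tensProd d n (fun j => M (p j)) := by
      intro p
      have : ∀ S ∈ (Finset.univ : Finset (Fin n)).powerset,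
          (if Finset.image p Finset.univ ⊆ S
            then (-1:ℂ)^(n - S.card) • tensProd d n (fun j => M (p j)) else 0)
          = (if Finset.image p Finset.univ ⊆ S then (-1:ℂ)^(n - S.card) else 0)
              • tensProd d n (fun j => M (p j)) := by
        intro S _
        split_ifs <;> simp
      rw [Finset.sum_congr rfl this, ← Finset.sum_smul, ← Finset.sum_filter, incl_excl]
    rw [Finset.sum_congr rfl fun p _ => step2 p]
    have step3 : ∑ p : Fin n → Fin n,
        (if Finset.image p Finset.univ = Finset.univ then (1:ℂ) else 0)
            • tensProd d n (fun j => M (p j))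
        = ∑ p ∈ Finset.univ.filter
            (fun p : Fin n → Fin n => Finset.image p Finset.univ = Finset.univ),
            tensProd d n (fun j => M (p j)) := by
      rw [Finset.sum_filter]
      refine Finset.sum_congr rfl fun p _ => ?_
      split_ifs <;> simp
    rw [step3]
    refine (Finset.sum_bij (fun (σ : Equiv.Perm (Fin n)) _ => ⇑σ) ?_ ?_ ?_ ?_).symm
    · intro σ _
      simp only [Finset.mem_filter, Finset.mem_univ, true_and]
      ext b
      simp only [Finset.mem_image, Finset.mem_univ, true_and, iff_true]
      exact ⟨σ⁻¹ b, Equiv.apply_symm_apply σ b⟩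
    · intro σ _ τ _ h
      exact Equiv.coe_fn_injective h
    · intro p hp
      simp only [Finset.mem_filter, Finset.mem_univ, true_and] at hp
      have hsurj : Function.Surjective p := by
        intro b
        have : b ∈ Finset.image p Finset.univ := by rw [hp]; exact Finset.mem_univ b
        obtain ⟨a, _, ha⟩ := Finset.mem_image.mp this
        exact ⟨a, ha⟩
      have hbij : Function.Bijective p :=
        ⟨Finite.injective_iff_surjective.mpr hsurj, hsurj⟩
      exact ⟨Equiv.ofBijective p hbij, Finset.mem_univ _, rfl⟩
    · intro σ _
      rfl
  rw [← key]
  refine Submodule.sum_mem _ fun S _ => Submodule.smul_mem _ _ (Submodule.subset_span ?_)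
  exact ⟨∑ i ∈ S, M i, Submodule.sum_mem _ fun i _ => hM i, rfl⟩

lemma mem_span_tpowSet_of_perm_invariant (B : Submodule ℂ (Md d)) (X : MatN d n)
    (hXspan : X ∈ Submodule.span ℂ (tensSet B n))
    (hperm : ∀ σ : Equiv.Perm (Fin n), permMat d n σ * X = X * permMat d n σ) :
    X ∈ Submodule.span ℂ (tpowSet B n) := by
  classical
  have key : ∀ T ∈ Submodule.span ℂ (tensSet B n),
      ∑ σ : Equiv.Perm (Fin n), permMat d n σ * T * permMat d n σ⁻¹
        ∈ Submodule.span ℂ (tpowSet B n) := by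
    intro T hT
    induction hT using Submodule.span_induction with
    | mem T hT =>
      obtain ⟨M, hM, rfl⟩ := hT
      have : ∀ σ : Equiv.Perm (Fin n),
          permMat d n σ * tensProd d n M * permMat d n σ⁻¹
            = tensProd d n (fun i => M (σ⁻¹ i)) := fun σ => permMat_conj_tensProd σ M
      rw [Finset.sum_congr rfl fun σ _ => this σ]
      have hre : ∑ σ : Equiv.Perm (Fin n), tensProd d n (fun i => M (σ⁻¹ i))
          = ∑ σ : Equiv.Perm (Fin n), tensProd d n (fun i => M (σ i)) := by
        apply Fintype.sum_bijective (fun σ : Equiv.Perm (Fin n) => σ⁻¹)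
          (Function.Involutive.bijective (fun σ => inv_inv σ))
        intro σ
        rfl
      rw [hre]
      exact sum_perm_tensProd_mem B M hM
    | zero => simp
    | add T S _ _ hT hS =>
      have : ∑ σ : Equiv.Perm (Fin n), permMat d n σ * (T + S) * permMat d n σ⁻¹
          = (∑ σ : Equiv.Perm (Fin n), permMat d n σ * T * permMat d n σ⁻¹)
            + ∑ σ : Equiv.Perm (Fin n), permMat d n σ * S * permMat d n σ⁻¹ := by
        rw [← Finset.sum_add_distrib]
        refine Finset.sum_congr rfl fun σ _ => ?_
        rw [mul_add, add_mul]
      rw [this]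
      exact Submodule.add_mem _ hT hS
    | smul c T _ hT =>
      have : ∑ σ : Equiv.Perm (Fin n), permMat d n σ * (c • T) * permMat d n σ⁻¹
          = c • ∑ σ : Equiv.Perm (Fin n), permMat d n σ * T * permMat d n σ⁻¹ := by
        rw [Finset.smul_sum]
        refine Finset.sum_congr rfl fun σ _ => ?_
        rw [Matrix.mul_smul, Matrix.smul_mul]
      rw [this]
      exact Submodule.smul_mem _ _ hT
  have hsum := key X hXspan
  have hfix : ∑ σ : Equiv.Perm (Fin n), permMat d n σ * X * permMat d n σ⁻¹
      = (Fintype.card (Equiv.Perm (Fin n)) : ℂ) • X := by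
    have : ∀ σ : Equiv.Perm (Fin n), permMat d n σ * X * permMat d n σ⁻¹ = X := by
      intro σ
      rw [hperm σ, mul_assoc, permMat_mul_permMat, mul_inv_cancel, permMat_one, mul_one]
    rw [Finset.sum_congr rfl fun σ _ => this σ, Finset.sum_const, Finset.card_univ,
      Nat.cast_smul_eq_nsmul ℂ]
  rw [hfix] at hsum
  have hcard : (Fintype.card (Equiv.Perm (Fin n)) : ℂ) ≠ 0 :=
    Nat.cast_ne_zero.mpr Fintype.card_ne_zero
  have := Submodule.smul_mem _ (Fintype.card (Equiv.Perm (Fin n)) : ℂ)⁻¹ hsum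
  rwa [smul_smul, inv_mul_cancel₀ hcard, one_smul] at this

/-! ### Complex-analytic helpers -/

lemma entire_zero_of_zero_on_imaginary (F : ℂ → ℂ) (hF : Differentiable ℂ F)
    (h0 : ∀ t : ℝ, F (t * Complex.I) = 0) (z : ℂ) : F z = 0 := by
  have hA : AnalyticOnNhd ℂ F Set.univ := fun w _ => hF.analyticAt w
  have hfreq : ∃ᶠ w in nhdsWithin (0:ℂ) {(0:ℂ)}ᶜ, F w = 0 := by
    have htend : Filter.Tendsto (fun k : ℕ => ((1/(k+1:ℝ) : ℝ) : ℂ) * Complex.I)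
        Filter.atTop (nhdsWithin (0:ℂ) {(0:ℂ)}ᶜ) := by
      apply tendsto_nhdsWithin_of_tendsto_nhds_of_eventually_within
      · have h1 : Filter.Tendsto (fun k : ℕ => (1/(k+1:ℝ) : ℝ)) Filter.atTop (nhds 0) :=
          tendsto_one_div_add_atTop_nhds_zero_nat
        have h2 : Filter.Tendsto (fun t : ℝ => (t : ℂ) * Complex.I) (nhds 0) (nhds 0) := by
          have : Filter.Tendsto (fun t : ℝ => (t : ℂ) * Complex.I) (nhds 0)
              (nhds (((0:ℝ):ℂ) * Complex.I)) :=
            (Complex.continuous_ofReal.mul continuous_const).continuousAt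
          simpa using this
        exact h2.comp h1
      · filter_upwards with k
        simp only [Set.mem_compl_iff, Set.mem_singleton_iff]
        intro h
        have := mul_eq_zero.mp h
        rcases this with h' | h'
        · have : (1/(k+1:ℝ) : ℝ) = 0 := by exact_mod_cast h'
          have hk : (0:ℝ) < 1/(k+1:ℝ) := by positivity
          linarith
        · exact Complex.I_ne_zero h'
    exact htend.frequently (Filter.Frequently.of_forall fun k => h0 _)
  have := hA.eqOn_zero_of_preconnected_of_frequently_eq_zero isPreconnected_univ
    (Set.mem_univ (0:ℂ)) hfreq
  exact this (Set.mem_univ z)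

lemma entire_zero_of_cofinite_zeros (F : ℂ → ℂ) (hF : Differentiable ℂ F)
    (s : Set ℂ) (hs : s.Finite) (h0 : ∀ z ∉ s, F z = 0) (z : ℂ) : F z = 0 := by
  have hA : AnalyticOnNhd ℂ F Set.univ := fun w _ => hF.analyticAt w
  have hfreq : ∃ᶠ w in nhdsWithin (0:ℂ) {(0:ℂ)}ᶜ, F w = 0 := by
    have hcl : IsClosed (s \ {0}) := (hs.subset Set.diff_subset).isClosed
    have hmem : (s \ {0})ᶜ ∈ nhds (0:ℂ) := hcl.isOpen_compl.mem_nhds (by simp)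
    have hev : ∀ᶠ w in nhdsWithin (0:ℂ) {(0:ℂ)}ᶜ, w ∈ (s \ {0})ᶜ :=
      Filter.eventually_iff_exists_mem.mpr
        ⟨(s \ {0})ᶜ, nhdsWithin_le_nhds hmem, fun w hw => hw⟩
    have hev2 : ∀ᶠ w in nhdsWithin (0:ℂ) {(0:ℂ)}ᶜ, w ∈ ({(0:ℂ)}ᶜ : Set ℂ) :=
      eventually_mem_nhdsWithin
    have : ∀ᶠ w in nhdsWithin (0:ℂ) {(0:ℂ)}ᶜ, F w = 0 := by
      filter_upwards [hev, hev2] with w hw1 hw2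
      apply h0
      intro hws
      exact hw1 ⟨hws, hw2⟩
    exact this.frequently
  have := hA.eqOn_zero_of_preconnected_of_frequently_eq_zero isPreconnected_univ
    (Set.mem_univ (0:ℂ)) hfreq
  exact this (Set.mem_univ z)

lemma differentiable_L_tpow (L : MatN d n →ₗ[ℂ] ℂ) (M : ℂ → Md d)
    (hM : ∀ a b, Differentiable ℂ (fun z => M z a b)) :
    Differentiable ℂ (fun z => L (tpow d n (M z))) := by
  have key : (fun z => L (tpow d n (M z)))
      = fun z => ∑ p : (Fin n → Fin d) × (Fin n → Fin d),
          (∏ i, M z (p.1 i) (p.2 i))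
            * L (tensProd d n (fun i => Matrix.single (p.1 i) (p.2 i) 1)) := by
    funext z
    conv_lhs => rw [matN_decomp (tpow d n (M z))]
    rw [map_sum]
    refine Finset.sum_congr rfl fun p _ => ?_
    rw [LinearMap.map_smul, smul_eq_mul]
    rfl
  rw [key]
  apply Differentiable.fun_sum
  intro p _
  apply Differentiable.mul_const
  apply Differentiable.fun_finsetProd
  intro i _
  exact hM (p.1 i) (p.2 i)

/-! ### Functional calculus inside a subalgebra -/

lemma conj_mul_conj (U : Md d) (hU2 : star U * U = 1) (D E : Md d) :
    (U * D * star U) * (U * E * star U) = U * (D * E) * star U := by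
  have key : star U * (U * (E * star U)) = E * star U := by
    rw [← mul_assoc, hU2, one_mul]
  simp only [mul_assoc]
  rw [key]

lemma aeval_conj (U : Md d) (hU1 : U * star U = 1) (v : Fin d → ℂ) (P : Polynomial ℂ) :
    Polynomial.aeval (U * Matrix.diagonal v * star U) P
      = U * Matrix.diagonal (fun i => P.eval (v i)) * star U := by
  have hU2 : star U * U = 1 := mul_eq_one_comm.mp hU1
  induction P using Polynomial.induction_on' with
  | add p q hp hq =>
    rw [map_add, hp, hq, ← Matrix.add_mul, ← Matrix.mul_add, Matrix.diagonal_add]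
    have : (fun i => p.eval (v i) + q.eval (v i)) = fun i => (p + q).eval (v i) := by
      funext i; simp [Polynomial.eval_add]
    rw [this]
  | monomial k c =>
    have hpow : ∀ m : ℕ, (U * Matrix.diagonal v * star U) ^ m
        = U * Matrix.diagonal (fun i => v i ^ m) * star U := by
      intro m
      induction m with
      | zero =>
        have : (fun i => v i ^ 0) = fun _ => (1:ℂ) := by funext i; simp
        rw [pow_zero, this, Matrix.diagonal_one, mul_one, hU1]
      | succ m ih =>
        rw [pow_succ, ih, conj_mul_conj U hU2, Matrix.diagonal_mul_diagonal]
        have : (fun i => v i ^ m * v i) = fun i => v i ^ (m + 1) := by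
          funext i; rw [pow_succ]
        rw [this]
    rw [Polynomial.aeval_monomial, hpow k, ← Algebra.smul_def]
    have hfun : (fun i => (Polynomial.monomial k c).eval (v i)) = c • fun i => v i ^ k := by
      funext i
      simp [Polynomial.eval_monomial]
    rw [hfun, Matrix.diagonal_smul, Matrix.mul_smul, Matrix.smul_mul]

/-- Functional calculus for a Hermitian matrix. -/
def funCalc {q : Md d} (hq : q.IsHermitian) (g : ℝ → ℂ) : Md d :=
  (hq.eigenvectorUnitary : Md d) * Matrix.diagonal (fun i => g (hq.eigenvalues i))
    * star (hq.eigenvectorUnitary : Md d)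

lemma funCalc_hU1 {q : Md d} (hq : q.IsHermitian) :
    (hq.eigenvectorUnitary : Md d) * star (hq.eigenvectorUnitary : Md d) = 1 :=
  Matrix.mem_unitaryGroup_iff.mp (hq.eigenvectorUnitary).2

lemma funCalc_hU2 {q : Md d} (hq : q.IsHermitian) :
    star (hq.eigenvectorUnitary : Md d) * (hq.eigenvectorUnitary : Md d) = 1 :=
  Matrix.mem_unitaryGroup_iff'.mp (hq.eigenvectorUnitary).2

lemma funCalc_mul {q : Md d} (hq : q.IsHermitian) (g₁ g₂ : ℝ → ℂ) :
    funCalc hq g₁ * funCalc hq g₂ = funCalc hq (fun t => g₁ t * g₂ t) := by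
  rw [funCalc, funCalc, funCalc, conj_mul_conj _ (funCalc_hU2 hq), Matrix.diagonal_mul_diagonal]

lemma funCalc_one {q : Md d} (hq : q.IsHermitian) :
    funCalc hq (fun _ => 1) = 1 := by
  rw [funCalc]
  have : Matrix.diagonal (fun _ : Fin d => (1:ℂ)) = 1 := Matrix.diagonal_one
  rw [this, mul_one, funCalc_hU1 hq]

lemma funCalc_congr {q : Md d} (hq : q.IsHermitian) (g₁ g₂ : ℝ → ℂ)
    (h : ∀ i, g₁ (hq.eigenvalues i) = g₂ (hq.eigenvalues i)) :
    funCalc hq g₁ = funCalc hq g₂ := by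
  rw [funCalc, funCalc]
  congr 1
  congr 1
  exact congrArg Matrix.diagonal (funext fun i => h i)

lemma funCalc_id {q : Md d} (hq : q.IsHermitian) :
    funCalc hq (fun t => (t : ℂ)) = q := by
  rw [funCalc]
  exact hq.spectral_theorem.symm

lemma funCalc_star {q : Md d} (hq : q.IsHermitian) (g : ℝ → ℂ) :
    star (funCalc hq g) = funCalc hq (fun t => (starRingEnd ℂ) (g t)) := by
  rw [funCalc, funCalc]
  simp only [Matrix.star_eq_conjTranspose, Matrix.conjTranspose_mul,
    Matrix.conjTranspose_conjTranspose, Matrix.diagonal_conjTranspose, mul_assoc,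
    Pi.star_def, RCLike.star_def]

lemma funCalc_mem {q : Md d} (hq : q.IsHermitian) (B : Subalgebra ℂ (Md d))
    (hqB : q ∈ B) (g : ℝ → ℂ) : funCalc hq g ∈ B := by
  classical
  set s : Finset ℂ := Finset.univ.image (fun i => ((hq.eigenvalues i : ℝ) : ℂ)) with hs
  set r : ℂ → ℂ := fun w => g w.re with hr
  set P := Lagrange.interpolate s id r with hP
  have heval : ∀ i, P.eval ((hq.eigenvalues i : ℝ) : ℂ) = g (hq.eigenvalues i) := by
    intro i
    have hi : ((hq.eigenvalues i : ℝ) : ℂ) ∈ s := by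
      rw [hs]
      exact Finset.mem_image.mpr ⟨i, Finset.mem_univ i, rfl⟩
    have := Lagrange.eval_interpolate_at_node r (Set.injOn_id _) hi
    simp only [id_eq] at this
    rw [hP, this, hr]
    simp
  have haeval : Polynomial.aeval q P = funCalc hq g := by
    conv_lhs => rw [hq.spectral_theorem, Unitary.conjStarAlgAut_apply]
    rw [aeval_conj _ (funCalc_hU1 hq)]
    rw [funCalc]
    refine congrArg (fun D => (hq.eigenvectorUnitary : Md d) * D
      * star (hq.eigenvectorUnitary : Md d)) ?_
    refine congrArg Matrix.diagonal (funext fun i => ?_)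
    show P.eval (RCLike.ofReal (hq.eigenvalues i)) = g (hq.eigenvalues i)
    have hco : (RCLike.ofReal (hq.eigenvalues i) : ℂ) = ((hq.eigenvalues i : ℝ) : ℂ) := rfl
    rw [hco, heval i]
  have hsum := Polynomial.aeval_eq_sum_range (R := ℂ) (S := Md d) (p := P) q
  rw [← haeval, hsum]
  exact Subalgebra.sum_mem B fun k _ =>
    Subalgebra.smul_mem B (Subalgebra.pow_mem B hqB k) _

lemma posDef_conj_self {c : Md d} (hc : IsUnit c) : (cᴴ * c).PosDef := by
  refine Matrix.PosDef.of_dotProduct_mulVec_pos (Matrix.isHermitian_conjTranspose_mul_self c) fun x hx => ?_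
  have hrw : dotProduct (star x) ((cᴴ * c) *ᵥ x)
      = dotProduct (star (c *ᵥ x)) (c *ᵥ x) := by
    rw [← Matrix.mulVec_mulVec, Matrix.dotProduct_mulVec, Matrix.vecMul_conjTranspose, star_star]
  rw [hrw]
  have hne : c *ᵥ x ≠ 0 := by
    intro h0
    apply hx
    have hinj : Function.Injective c.mulVec := Matrix.mulVec_injective_iff_isUnit.mpr hc
    apply hinj
    rw [h0, Matrix.mulVec_zero]
  have hnz : dotProduct (star (c *ᵥ x)) (c *ᵥ x) ≠ 0 := by
    intro h
    exact hne (dotProduct_star_self_eq_zero.mp h)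
  have hnn : 0 ≤ dotProduct (star (c *ᵥ x)) (c *ᵥ x) := by
    simp only [dotProduct, Pi.star_apply]
    exact Finset.sum_nonneg fun i _ => star_mul_self_nonneg _
  exact lt_of_le_of_ne hnn (Ne.symm hnz)

/-! ### The one-parameter family E(z) -/

def Efam {q : Md d} (hq : q.IsHermitian) (z : ℂ) : Md d :=
  funCalc hq (fun t => Complex.exp (z * ((Real.log t / 2 : ℝ) : ℂ)))

lemma Efam_mul {q : Md d} (hq : q.IsHermitian) (z w : ℂ) :
    Efam hq z * Efam hq w = Efam hq (z + w) := by
  rw [Efam, Efam, Efam, funCalc_mul]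
  exact congrArg (funCalc hq) (funext fun t => by rw [← Complex.exp_add, ← add_mul])

lemma Efam_zero {q : Md d} (hq : q.IsHermitian) : Efam hq 0 = 1 := by
  rw [Efam]
  have h : (fun t : ℝ => Complex.exp (0 * ((Real.log t / 2 : ℝ) : ℂ))) = fun _ => (1:ℂ) := by
    funext t; simp
  rw [h, funCalc_one]

lemma Efam_star {q : Md d} (hq : q.IsHermitian) (z : ℂ) :
    star (Efam hq z) = Efam hq (starRingEnd ℂ z) := by
  rw [Efam, Efam, funCalc_star]
  refine congrArg (funCalc hq) (funext fun t => ?_)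
  rw [← Complex.exp_conj, RingHom.map_mul, Complex.conj_ofReal]

lemma Efam_two {c : Md d} (hu : IsUnit c) :
    Efam (Matrix.isHermitian_conjTranspose_mul_self c) 2 = cᴴ * c := by
  have h1 : Efam (Matrix.isHermitian_conjTranspose_mul_self c) 2
      = funCalc (Matrix.isHermitian_conjTranspose_mul_self c) (fun t => (t:ℂ)) := by
    rw [Efam]
    apply funCalc_congr
    intro i
    have hpos : 0 < (Matrix.isHermitian_conjTranspose_mul_self c).eigenvalues i :=
      (posDef_conj_self hu).eigenvalues_pos i
    have h2 : (2:ℂ) * ((Real.log ((Matrix.isHermitian_conjTranspose_mul_self c).eigenvalues i)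
        / 2 : ℝ) : ℂ)
        = ((Real.log ((Matrix.isHermitian_conjTranspose_mul_self c).eigenvalues i) : ℝ) : ℂ) := by
      push_cast; ring
    rw [h2, ← Complex.ofReal_exp, Real.exp_log hpos]
  rw [h1, funCalc_id]

lemma Efam_mem {q : Md d} (hq : q.IsHermitian) (B : Subalgebra ℂ (Md d)) (hqB : q ∈ B)
    (z : ℂ) : Efam hq z ∈ B :=
  funCalc_mem hq B hqB _

lemma Efam_entry {q : Md d} (hq : q.IsHermitian) (z : ℂ) (a b : Fin d) :
    Efam hq z a b = ∑ j, (hq.eigenvectorUnitary : Md d) a j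
      * Complex.exp (z * ((Real.log (hq.eigenvalues j) / 2 : ℝ) : ℂ))
      * star (hq.eigenvectorUnitary : Md d) j b := by
  rw [Efam, funCalc, Matrix.mul_apply]
  refine Finset.sum_congr rfl fun j _ => ?_
  rw [Matrix.mul_diagonal]

lemma Efam_diff {q : Md d} (hq : q.IsHermitian) (a b : Fin d) :
    Differentiable ℂ (fun z => Efam hq z a b) := by
  have h : (fun z => Efam hq z a b) = fun z => ∑ j, (hq.eigenvectorUnitary : Md d) a j
      * Complex.exp (z * ((Real.log (hq.eigenvalues j) / 2 : ℝ) : ℂ))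
      * star (hq.eigenvectorUnitary : Md d) j b := funext fun z => Efam_entry hq z a b
  rw [h]
  apply Differentiable.fun_sum
  intro j _
  apply Differentiable.mul_const
  exact (differentiable_const _).mul
    (Complex.differentiable_exp.comp (differentiable_id.mul_const _))

/-! ### The centralizer subalgebra -/

def Hmat (H : Subgroup (Matrix.unitaryGroup (Fin d) ℂ)) : Set (Md d) :=
  {a | ∃ h ∈ H, a = ((h : Matrix.unitaryGroup (Fin d) ℂ) : Md d)}

abbrev Bsub (H : Subgroup (Matrix.unitaryGroup (Fin d) ℂ)) : Subalgebra ℂ (Md d) :=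
  Subalgebra.centralizer ℂ (Hmat H)

lemma Hmat_star (H : Subgroup (Matrix.unitaryGroup (Fin d) ℂ)) :
    ∀ a ∈ Hmat H, star a ∈ Hmat H := by
  rintro a ⟨h, hh, rfl⟩
  refine ⟨h⁻¹, H.inv_mem hh, ?_⟩
  rw [← Unitary.star_eq_inv]
  rfl

lemma Bsub_star (H : Subgroup (Matrix.unitaryGroup (Fin d) ℂ)) {b : Md d}
    (hb : b ∈ Bsub H) : star b ∈ Bsub H := by
  rw [Subalgebra.mem_centralizer_iff] at hb ⊢
  intro a ha
  have h1 := hb (star a) (Hmat_star H a ha)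
  have h2 := congrArg star h1
  rw [StarMul.star_mul, StarMul.star_mul, star_star] at h2
  exact h2.symm

lemma mem_unitary_centralizer_iff (H : Subgroup (Matrix.unitaryGroup (Fin d) ℂ))
    (V : Matrix.unitaryGroup (Fin d) ℂ) :
    V ∈ Subgroup.centralizer (H : Set (Matrix.unitaryGroup (Fin d) ℂ))
      ↔ (V : Md d) ∈ Bsub H := by
  rw [Subgroup.mem_centralizer_iff, Subalgebra.mem_centralizer_iff]
  constructor
  · rintro hv a ⟨h, hh, rfl⟩
    have := congrArg (fun w : Matrix.unitaryGroup (Fin d) ℂ => (w : Md d)) (hv h hh)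
    simpa using this
  · intro hv h hh
    apply Subtype.ext
    exact hv _ ⟨h, hh, rfl⟩

/-! ### Tensor powers of centralizer elements lie in the span of Q(H') -/

lemma tpow_mem_span_Qset (H : Subgroup (Matrix.unitaryGroup (Fin d) ℂ)) (c : Md d)
    (hc : c ∈ Bsub H) :
    tpow d n c ∈ Submodule.span ℂ
      (Qset d n (Subgroup.centralizer (H : Set (Matrix.unitaryGroup (Fin d) ℂ)))) := by
  classical
  by_contra hmem
  set Y := Submodule.span ℂ
    (Qset d n (Subgroup.centralizer (H : Set (Matrix.unitaryGroup (Fin d) ℂ)))) with hY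
  have hne : (Submodule.Quotient.mk (tpow d n c) : MatN d n ⧸ Y) ≠ 0 := by
    intro h0
    exact hmem ((Submodule.Quotient.mk_eq_zero Y).mp h0)
  obtain ⟨φ, hφ⟩ : ∃ φ : Module.Dual ℂ (MatN d n ⧸ Y),
      φ (Submodule.Quotient.mk (tpow d n c)) ≠ 0 := by
    by_contra hall
    push_neg at hall
    exact hne ((Module.forall_dual_apply_eq_zero_iff ℂ _).mp hall)
  set L : MatN d n →ₗ[ℂ] ℂ := φ.comp Y.mkQ with hLdef
  have hL0 : ∀ T ∈ Qset d n (Subgroup.centralizer (H : Set (Matrix.unitaryGroup (Fin d) ℂ))),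
      L T = 0 := by
    intro T hT
    have hTY : T ∈ Y := Submodule.subset_span hT
    have : Y.mkQ T = 0 := by
      rw [Submodule.mkQ_apply, Submodule.Quotient.mk_eq_zero]
      exact hTY
    rw [hLdef, LinearMap.comp_apply, this, map_zero]
  -- Claim A : for invertible elements of the centralizer algebra
  have claimA : ∀ c' : Md d, c' ∈ Bsub H → IsUnit c' → L (tpow d n c') = 0 := by
    intro c' hc' hu
    set hq := Matrix.isHermitian_conjTranspose_mul_self c' with hhq
    have hqmem : c'ᴴ * c' ∈ Bsub H := by
      have := Bsub_star H hc'
      rw [Matrix.star_eq_conjTranspose] at this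
      exact mul_mem this hc'
    have hE_mem : ∀ z, Efam hq z ∈ Bsub H := fun z => Efam_mem hq _ hqmem z
    set u := c' * Efam hq (-1) with hudef
    have hu_mem : u ∈ Bsub H := mul_mem hc' (hE_mem _)
    have hEm1 : star (Efam hq (-1)) = Efam hq (-1) := by
      rw [Efam_star]
      norm_num
    have hu_star_mul : star u * u = 1 := by
      rw [hudef, StarMul.star_mul, hEm1]
      have h1 : Efam hq (-1) * star c' * (c' * Efam hq (-1))
          = Efam hq (-1) * (star c' * c' * Efam hq (-1)) := by
        simp only [mul_assoc]
      rw [h1]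
      have h2 : star c' * c' = Efam hq 2 := by
        rw [Matrix.star_eq_conjTranspose]
        exact (Efam_two hu).symm
      rw [h2, Efam_mul, Efam_mul]
      norm_num
      exact Efam_zero hq
    have hVunit : ∀ z : ℂ, starRingEnd ℂ z + z = 0 →
        (u * Efam hq z) ∈ Matrix.unitaryGroup (Fin d) ℂ := by
      intro z hz
      apply Matrix.mem_unitaryGroup_iff'.mpr
      rw [StarMul.star_mul]
      have h1 : star (Efam hq z) * star u * (u * Efam hq z)
          = star (Efam hq z) * (star u * u) * Efam hq z := by
        simp only [mul_assoc]
      rw [h1, hu_star_mul, mul_one, Efam_star, Efam_mul, hz, Efam_zero]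
    have hF0 : ∀ t : ℝ, L (tpow d n (u * Efam hq ((t:ℂ) * Complex.I))) = 0 := by
      intro t
      apply hL0
      have hz : starRingEnd ℂ ((t:ℂ) * Complex.I) + (t:ℂ) * Complex.I = 0 := by
        rw [RingHom.map_mul, Complex.conj_ofReal, Complex.conj_I]
        ring
      refine ⟨⟨u * Efam hq ((t:ℂ) * Complex.I), hVunit _ hz⟩, ?_, rfl⟩
      rw [mem_unitary_centralizer_iff]
      exact mul_mem hu_mem (hE_mem _)
    have hFdiff : Differentiable ℂ (fun z => L (tpow d n (u * Efam hq z))) := by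
      apply differentiable_L_tpow
      intro a b
      have h : (fun z => (u * Efam hq z) a b)
          = fun z => ∑ k, u a k * Efam hq z k b := by
        funext z
        rw [Matrix.mul_apply]
      rw [h]
      apply Differentiable.fun_sum
      intro k _
      exact (differentiable_const _).mul (Efam_diff hq k b)
    have hzero := entire_zero_of_zero_on_imaginary _ hFdiff (fun t => hF0 t) 1
    have hc'eq : u * Efam hq 1 = c' := by
      rw [hudef, mul_assoc, Efam_mul]
      norm_num
      rw [Efam_zero, mul_one]
    rwa [hc'eq] at hzero
  -- Claim B : general elements by removing the spectrum
  have hroots : {z : ℂ | ¬ IsUnit (c - z • 1)}.Finite := by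
    apply Set.Finite.subset (Matrix.finite_spectrum c)
    intro z hz
    rw [Set.mem_setOf_eq] at hz
    rw [spectrum.mem_iff]
    intro hunit
    apply hz
    have heq : c - z • (1 : Md d) = -(algebraMap ℂ (Md d) z - c) := by
      rw [Algebra.algebraMap_eq_smul_one, neg_sub]
    rw [heq]
    exact hunit.neg
  have hgdiff : Differentiable ℂ (fun z : ℂ => L (tpow d n (c - z • (1 : Md d)))) := by
    apply differentiable_L_tpow
    intro a b
    have h : (fun z => (c - z • (1:Md d)) a b) = fun z => c a b - z * (1:Md d) a b := by
      funext z
      rw [Matrix.sub_apply, Matrix.smul_apply, smul_eq_mul]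
    rw [h]
    exact (differentiable_const _).sub (differentiable_id.mul_const _)
  have hg0 : ∀ z ∉ {z : ℂ | ¬ IsUnit (c - z • 1)}, L (tpow d n (c - z • 1)) = 0 := by
    intro z hz
    rw [Set.mem_setOf_eq, not_not] at hz
    exact claimA _ (sub_mem hc (Subalgebra.smul_mem _ (one_mem _) z)) hz
  have hfin := entire_zero_of_cofinite_zeros _ hgdiff _ hroots hg0 0
  apply hφ
  have hc0 : c - (0:ℂ) • (1:Md d) = c := by
    rw [zero_smul, sub_zero]
  rw [hc0] at hfin
  exact hfin

/-! ### Commutation of generators (easy direction) -/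

lemma tensProd_commutes_tpow (V : Md d) (M : Fin n → Md d)
    (hcomm : ∀ i, M i * V = V * M i) :
    tensProd d n M * tpow d n V = tpow d n V * tensProd d n M := by
  rw [tpow_eq_tensProd, tensProd_mul, tensProd_mul]
  exact congrArg (tensProd d n) (funext fun i => hcomm i)

lemma permMat_commutes_tpow (σ : Equiv.Perm (Fin n)) (V : Md d) :
    permMat d n σ * tpow d n V = tpow d n V * permMat d n σ := by
  rw [tpow_eq_tensProd, permMat_mul_tensProd]

end PIC

theorem permutation_invariant_commutant' (d n : ℕ)
    (H : Subgroup (Matrix.unitaryGroup (Fin d) ℂ)) :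
    {X : MatN d n | ∀ W ∈ groupTensorSet d n H, W * X = X * W}
        ∩ {X : MatN d n | ∀ σ : Equiv.Perm (Fin n),
            permMat d n σ * X = X * permMat d n σ}
      = (Algebra.adjoin ℂ (Qset d n (Subgroup.centralizer (H : Set _)))
          : Set (MatN d n)) := by
  classical
  ext X
  simp only [Set.mem_inter_iff, Set.mem_setOf_eq, SetLike.mem_coe]
  constructor
  · rintro ⟨hcomm, hperm⟩
    -- Step 1 : slices lie in the centralizer algebra
    have hslice : ∀ (i : Fin n) x y, PIC.slice i x y X ∈ (PIC.Bsub H).toSubmodule := by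
      intro i x y
      rw [Subalgebra.mem_toSubmodule, Subalgebra.mem_centralizer_iff]
      rintro a ⟨h, hh, rfl⟩
      refine (PIC.commute_singleSlot_iff i _ X).mp ?_ x y
      have hfun : (fun j => if j = i then ((h : Matrix.unitaryGroup (Fin d) ℂ) : PIC.Md d)
            else 1)
          = fun j => ((((if j = i then (⟨h, hh⟩ : H) else 1) : H)
              : Matrix.unitaryGroup (Fin d) ℂ) : PIC.Md d) := by
        funext j
        by_cases hj : j = i
        · rw [if_pos hj, if_pos hj]
        · rw [if_neg hj, if_neg hj]
          simp
      show PIC.singleSlot i _ * X = X * PIC.singleSlot i _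
      rw [PIC.singleSlot, hfun]
      exact hcomm _ ⟨_, rfl⟩
    -- Step 2 : X lies in the span of tensor products of centralizer elements
    have hX2 : X ∈ Submodule.span ℂ (PIC.tensSet (PIC.Bsub H).toSubmodule n) :=
      PIC.mem_span_tensSet_of_slices _ X hslice
    -- Step 3 : permutation invariance gives the span of tensor powers
    have hX3 : X ∈ Submodule.span ℂ (PIC.tpowSet (PIC.Bsub H).toSubmodule n) :=
      PIC.mem_span_tpowSet_of_perm_invariant _ X hX2 hperm
    -- Step 4 : tensor powers of centralizer elements lie in span of Q(H')
    have hle : Submodule.span ℂ (PIC.tpowSet (PIC.Bsub H).toSubmodule n)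
        ≤ Submodule.span ℂ (Qset d n (Subgroup.centralizer (H : Set _))) := by
      rw [Submodule.span_le]
      rintro T ⟨c, hcB, rfl⟩
      exact PIC.tpow_mem_span_Qset H c (Subalgebra.mem_toSubmodule _ |>.mp hcB)
    have hX4 := hle hX3
    -- Step 5 : span ⊆ adjoin
    have hle2 : Submodule.span ℂ (Qset d n (Subgroup.centralizer (H : Set _)))
        ≤ Subalgebra.toSubmodule (Algebra.adjoin ℂ
            (Qset d n (Subgroup.centralizer (H : Set _)))) := by
      rw [Submodule.span_le]
      exact Algebra.subset_adjoin
    exact Subalgebra.mem_toSubmodule _ |>.mp (hle2 hX4)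
  · intro hX
    have hadj : Algebra.adjoin ℂ (Qset d n (Subgroup.centralizer (H : Set _)))
        ≤ Subalgebra.centralizer ℂ
            (groupTensorSet d n H ∪ {P | ∃ σ : Equiv.Perm (Fin n), P = permMat d n σ}) := by
      apply Algebra.adjoin_le
      rintro T ⟨V, hV, rfl⟩
      rw [SetLike.mem_coe, Subalgebra.mem_centralizer_iff]
      rintro W (⟨M, rfl⟩ | ⟨σ, rfl⟩)
      · apply PIC.tensProd_commutes_tpow
        intro i
        have hVB : ((V : Matrix.unitaryGroup (Fin d) ℂ) : PIC.Md d) ∈ PIC.Bsub H :=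
          (PIC.mem_unitary_centralizer_iff H V).mp hV
        rw [Subalgebra.mem_centralizer_iff] at hVB
        exact hVB _ ⟨M i, (M i).2, rfl⟩
      · exact PIC.permMat_commutes_tpow σ _
    have hmem := hadj hX
    rw [Subalgebra.mem_centralizer_iff] at hmem
    constructor
    · intro W hW
      exact hmem W (Set.mem_union_left _ hW)
    · intro σ
      exact hmem _ (Set.mem_union_right _ ⟨σ, rfl⟩)

theorem permutation_invariant_commutant (d n : ℕ) (hd : 1 ≤ d) (hn : 1 ≤ n)
    (H : Subgroup (Matrix.unitaryGroup (Fin d) ℂ)) :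
    {X : MatN d n | ∀ W ∈ groupTensorSet d n H, W * X = X * W}
        ∩ {X : MatN d n | ∀ σ : Equiv.Perm (Fin n),
            permMat d n σ * X = X * permMat d n σ}
      = (Algebra.adjoin ℂ (Qset d n (Subgroup.centralizer (H : Set _)))
          : Set (MatN d n)) :=
  permutation_invariant_commutant' d n H
end
end

section
/- Twirling lemma: let H be a closed subgroup of U(d) with Haar probability measure μ_H, and let p be a Borel probability measure on Matrix (Fin d) (Fin d) ℂ, supported on density matrices, such that for every V ∈ H the pushforward of p under ρ ↦ V·ρ·V* equals p. Let l : ℕ and let s : Matrix (Fin d) (Fin d) ℂ → (Fin l → ℝ) be Borel measurable with s(V·ρ·V*) = s(ρ) for every V ∈ H and every ρ. For a matrix M on (ℂ^d)^{⊗n}, define T(M) := ∫_H V^{⊗n}·M·(V^{⊗n})* dμ_H(V) (entrywise Bochner integral). Then for every Borel set Δ ⊆ (Fin l → ℝ), ∫ over {ρ : s(ρ) ∈ Δ} of trace(ρ^{⊗n}·T(M)) dp(ρ) = ∫ over {ρ : s(ρ) ∈ Δ} of trace(ρ^{⊗n}·M) dp(ρ); in particular the conditional outcome statistics of the twirled measurement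 coincide with those of the original one. -/
/- Twirling lemma: for a closed subgroup H of U(d) with Haar probability
measure μ, an H-invariant prior p on density matrices, and H-invariant
parameters s, the twirled measurement operator T(M) := ∫ V^{⊗n} M (V^{⊗n})* dμ
is exactly as informative about s as M. -/

open Matrix MeasureTheory
open scoped ComplexOrder

noncomputable section

/-- The Borel measurable structure on matrices (entrywise). -/
instance matrixMeasurableSpace (m n : Type) : MeasurableSpace (Matrix m n ℂ) :=
  inferInstanceAs (MeasurableSpace (m → n → ℂ))

/-- The underlying set of matrices of a subgroup of the unitary group. -/
def carrier (d : ℕ) (H : Subgroup (Matrix.unitaryGroup (Fin d) ℂ)) :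
    Set (Matrix (Fin d) (Fin d) ℂ) :=
  {V | ∃ U ∈ H, V = ((U : Matrix.unitaryGroup (Fin d) ℂ) : Matrix (Fin d) (Fin d) ℂ)}

/-! ### Auxiliary lemmas -/

lemma tpow_mul (d n : ℕ) (A B : Matrix (Fin d) (Fin d) ℂ) :
    tpow d n (A * B) = tpow d n A * tpow d n B := by
  ext x y
  simp only [tpow, Matrix.of_apply, Matrix.mul_apply]
  rw [Finset.prod_univ_sum]
  simp [Finset.prod_mul_distrib]

lemma tpow_conjTranspose (d n : ℕ) (A : Matrix (Fin d) (Fin d) ℂ) :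
    tpow d n Aᴴ = (tpow d n A)ᴴ := by
  ext x y
  simp [tpow, Matrix.conjTranspose_apply, star_prod]

lemma trace_mul_sum {d n : ℕ} (A B : MatN d n) :
    (A * B).trace = ∑ x, ∑ y, A x y * B y x := by
  simp [Matrix.trace, Matrix.mul_apply, Matrix.diag]

lemma single_form {d : ℕ} (ρ : Matrix (Fin d) (Fin d) ℂ) (a b : Fin d) (c1 c2 : ℂ) :
    star (Pi.single a c1) ⬝ᵥ (ρ *ᵥ Pi.single b c2) = star c1 * (ρ a b * c2) := by
  rw [← Pi.single_star]
  simp [Matrix.mulVec_single, dotProduct, Pi.single_apply]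

lemma psd_diag_nonneg {d : ℕ} {ρ : Matrix (Fin d) (Fin d) ℂ} (hρ : ρ.PosSemidef)
    (k : Fin d) : 0 ≤ (ρ k k).re ∧ (ρ k k).im = 0 := by
  have := hρ.dotProduct_mulVec_nonneg (Pi.single k 1)
  rw [single_form] at this
  simp only [star_one, one_mul, mul_one] at this
  rw [Complex.nonneg_iff] at this
  exact ⟨this.1, this.2.symm⟩

lemma unitary_entry_norm_le {d : ℕ} {V : Matrix (Fin d) (Fin d) ℂ}
    (hV : V * Vᴴ = 1) (i j : Fin d) : ‖V i j‖ ≤ 1 := by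
  have h1 : (V * Vᴴ) i i = 1 := by rw [hV]; simp
  rw [Matrix.mul_apply] at h1
  simp only [Matrix.conjTranspose_apply] at h1
  have h2 : (∑ k, Complex.normSq (V i k) : ℝ) = 1 := by
    have := congrArg Complex.re h1
    simpa [Complex.mul_conj] using this
  have h3 : Complex.normSq (V i j) ≤ 1 := by
    rw [← h2]
    exact Finset.single_le_sum (fun k _ => Complex.normSq_nonneg _) (Finset.mem_univ j)
  have h4 : ‖V i j‖ ^ 2 ≤ 1 := by
    rw [← Complex.normSq_eq_norm_sq]; exact h3
  nlinarith [norm_nonneg (V i j)]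

lemma psd_entry_norm_le {d : ℕ} {ρ : Matrix (Fin d) (Fin d) ℂ} (hρ : ρ.PosSemidef)
    (htr : ρ.trace = 1) (i j : Fin d) : ‖ρ i j‖ ≤ 1 := by
  have hdiag := fun k => psd_diag_nonneg hρ k
  have htr' : (∑ k, (ρ k k).re : ℝ) = 1 := by
    have := congrArg Complex.re htr
    simpa [Matrix.trace, Matrix.diag, Complex.re_sum] using this
  have hle : ∀ k, (ρ k k).re ≤ 1 := by
    intro k
    rw [← htr']
    exact Finset.single_le_sum (fun m _ => (hdiag m).1) (Finset.mem_univ k)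
  by_cases hij : i = j
  · subst hij
    have : ρ i i = ((ρ i i).re : ℂ) := by
      apply Complex.ext <;> simp [(hdiag i).2]
    rw [this, Complex.norm_real, Real.norm_eq_abs, abs_of_nonneg (hdiag i).1]
    exact hle i
  · by_cases h0 : ρ i j = 0
    · simp [h0]
    have hnz : (‖ρ i j‖ : ℂ) ≠ 0 := by
      simpa using norm_ne_zero_iff.2 h0
    set c : ℂ := -(starRingEnd ℂ (ρ i j)) / (‖ρ i j‖ : ℂ) with hc
    have hcρ : ρ i j * c = -(‖ρ i j‖ : ℂ) := by
      rw [hc]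
      field_simp
      rw [Complex.mul_conj, Complex.normSq_eq_norm_sq]
      push_cast
      rw [sq]
    have hherm : ρ j i = starRingEnd ℂ (ρ i j) := by
      have := congrFun (congrFun hρ.1 j) i
      simpa [Matrix.conjTranspose_apply] using this.symm
    have h2 : star c * ρ j i = -(‖ρ i j‖ : ℂ) := by
      have : star c * ρ j i = starRingEnd ℂ (ρ i j * c) := by
        rw [hherm]; simp [mul_comm]
      rw [this, hcρ]
      simp
    have hnorm : star c * c = 1 := by
      rw [Complex.star_def, ← Complex.normSq_eq_conj_mul_self, Complex.normSq_eq_norm_sq]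
      rw [hc]
      rw [norm_div, norm_neg, RCLike.norm_conj, Complex.norm_real, Real.norm_eq_abs,
        abs_of_nonneg (norm_nonneg _), div_self (norm_ne_zero_iff.2 h0)]
      norm_num
    have h3 : star c * (ρ j j * c) = ρ j j := by
      rw [show star c * (ρ j j * c) = (star c * c) * ρ j j by ring, hnorm, one_mul]
    have hq := hρ.dotProduct_mulVec_nonneg (Pi.single i 1 + Pi.single j c)
    rw [star_add, Matrix.mulVec_add, dotProduct_add, add_dotProduct,
      add_dotProduct, single_form, single_form, single_form, single_form] at hq
    simp only [star_one, one_mul, mul_one] at hq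
    rw [hcρ, h2, h3] at hq
    rw [Complex.nonneg_iff] at hq
    have hre := hq.1
    simp only [Complex.add_re, Complex.neg_re, Complex.ofReal_re] at hre
    have := hle i
    have := hle j
    linarith

lemma measurable_entry {d : ℕ} (a b : Fin d) :
    Measurable (fun V : Matrix (Fin d) (Fin d) ℂ => V a b) :=
  (measurable_pi_apply b).comp (measurable_pi_apply a)

lemma measurable_tpow_entry {d n : ℕ} (x y : Fin n → Fin d) :
    Measurable (fun V : Matrix (Fin d) (Fin d) ℂ => tpow d n V x y) := by
  simp only [tpow, Matrix.of_apply]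
  exact Finset.measurable_prod _ fun i _ => measurable_entry _ _

lemma measurable_conj_entry {d n : ℕ} (M : MatN d n) (x y : Fin n → Fin d) :
    Measurable (fun V : Matrix (Fin d) (Fin d) ℂ =>
      (tpow d n V * M * (tpow d n V)ᴴ) x y) := by
  have : (fun V : Matrix (Fin d) (Fin d) ℂ => (tpow d n V * M * (tpow d n V)ᴴ) x y)
      = fun V => ∑ b, (∑ a, tpow d n V x a * M a b) * star (tpow d n V y b) := by
    funext V
    simp [Matrix.mul_apply, Matrix.conjTranspose_apply]
  rw [this]
  exact Finset.measurable_sum _ fun b _ =>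
    ((Finset.measurable_sum _ fun a _ => (measurable_tpow_entry x a).mul measurable_const).mul
      (Complex.continuous_conj.measurable.comp (measurable_tpow_entry y b)))

lemma measurable_trace_tpow {d n : ℕ} (M : MatN d n) :
    Measurable (fun σ : Matrix (Fin d) (Fin d) ℂ => (tpow d n σ * M).trace) := by
  have : (fun σ : Matrix (Fin d) (Fin d) ℂ => (tpow d n σ * M).trace)
      = fun σ => ∑ x, ∑ y, (∏ i, σ (x i) (y i)) * M y x := by
    funext σ
    rw [trace_mul_sum]
    simp [tpow]
  rw [this]
  exact Finset.measurable_sum _ fun x _ => Finset.measurable_sum _ fun y _ =>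
    (Finset.measurable_prod _ fun i _ => measurable_entry _ _).mul measurable_const

lemma measurable_sandwich_pair {d : ℕ} (a b : Fin d) :
    Measurable (fun q : Matrix (Fin d) (Fin d) ℂ × Matrix (Fin d) (Fin d) ℂ =>
      (q.2ᴴ * q.1 * q.2) a b) := by
  have : (fun q : Matrix (Fin d) (Fin d) ℂ × Matrix (Fin d) (Fin d) ℂ =>
      (q.2ᴴ * q.1 * q.2) a b)
      = fun q => ∑ k, (∑ m, star (q.2 m a) * q.1 m k) * q.2 k b := by
    funext q
    simp [Matrix.mul_apply, Matrix.conjTranspose_apply]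
  rw [this]
  exact Finset.measurable_sum _ fun k _ =>
    ((Finset.measurable_sum _ fun m _ =>
      ((Complex.continuous_conj.measurable.comp ((measurable_entry m a).comp measurable_snd)).mul
        ((measurable_entry m k).comp measurable_fst))).mul
      ((measurable_entry k b).comp measurable_snd))

lemma measurable_trace_conj {d n : ℕ} (M : MatN d n) :
    Measurable (fun q : Matrix (Fin d) (Fin d) ℂ × Matrix (Fin d) (Fin d) ℂ =>
      (tpow d n (q.2ᴴ * q.1 * q.2) * M).trace) := by
  have : (fun q : Matrix (Fin d) (Fin d) ℂ × Matrix (Fin d) (Fin d) ℂ =>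
      (tpow d n (q.2ᴴ * q.1 * q.2) * M).trace)
      = fun q => ∑ x, ∑ y, (∏ i, (q.2ᴴ * q.1 * q.2) (x i) (y i)) * M y x := by
    funext q
    rw [trace_mul_sum]
    simp [tpow]
  rw [this]
  exact Finset.measurable_sum _ fun x _ => Finset.measurable_sum _ fun y _ =>
    (Finset.measurable_prod _ fun i _ => measurable_sandwich_pair _ _).mul measurable_const

lemma measurable_sandwich {d : ℕ} (W : Matrix (Fin d) (Fin d) ℂ) :
    Measurable (fun ρ : Matrix (Fin d) (Fin d) ℂ => Wᴴ * ρ * W) := by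
  have : (fun ρ : Matrix (Fin d) (Fin d) ℂ => Wᴴ * ρ * W)
      = (fun q : Matrix (Fin d) (Fin d) ℂ × Matrix (Fin d) (Fin d) ℂ => q.2ᴴ * q.1 * q.2)
        ∘ (fun ρ => (ρ, W)) := rfl
  have hg : Measurable (fun q : Matrix (Fin d) (Fin d) ℂ × Matrix (Fin d) (Fin d) ℂ =>
      q.2ᴴ * q.1 * q.2) :=
    measurable_pi_lambda _ fun a => measurable_pi_lambda _ fun b => measurable_sandwich_pair a b
  rw [this]
  exact hg.comp (measurable_id.prodMk measurable_const)

lemma norm_tpow_le {d n : ℕ} {V : Matrix (Fin d) (Fin d) ℂ}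
    (hV : ∀ i j, ‖V i j‖ ≤ 1) (x y : Fin n → Fin d) : ‖tpow d n V x y‖ ≤ 1 := by
  simp only [tpow, Matrix.of_apply]
  rw [norm_prod]
  exact Finset.prod_le_one (fun i _ => norm_nonneg _) (fun i _ => hV _ _)

lemma norm_conj_entry_le {d n : ℕ} (M : MatN d n) {V : Matrix (Fin d) (Fin d) ℂ}
    (hV : ∀ i j, ‖V i j‖ ≤ 1) (x y : Fin n → Fin d) :
    ‖(tpow d n V * M * (tpow d n V)ᴴ) x y‖ ≤ ∑ a, ∑ b, ‖M a b‖ := by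
  have h1 : (tpow d n V * M * (tpow d n V)ᴴ) x y
      = ∑ a, ∑ b, tpow d n V x a * M a b * star (tpow d n V y b) := by
    simp only [Matrix.mul_apply, Matrix.conjTranspose_apply, Finset.sum_mul]
    rw [Finset.sum_comm]
  rw [h1]
  refine (norm_sum_le _ _).trans (Finset.sum_le_sum fun a _ =>
    (norm_sum_le _ _).trans (Finset.sum_le_sum fun b _ => ?_))
  rw [norm_mul, norm_mul, norm_star]
  calc ‖tpow d n V x a‖ * ‖M a b‖ * ‖tpow d n V y b‖
      ≤ 1 * ‖M a b‖ * 1 := by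
        gcongr <;> [exact norm_tpow_le hV x a; exact norm_tpow_le hV y b]
    _ = ‖M a b‖ := by ring

lemma norm_trace_le {d n : ℕ} (M : MatN d n) {σ : Matrix (Fin d) (Fin d) ℂ}
    (hσ : ∀ i j, ‖σ i j‖ ≤ 1) :
    ‖(tpow d n σ * M).trace‖ ≤ ∑ x, ∑ y, ‖M y x‖ := by
  rw [trace_mul_sum]
  refine (norm_sum_le _ _).trans (Finset.sum_le_sum fun x _ =>
    (norm_sum_le _ _).trans (Finset.sum_le_sum fun y _ => ?_))
  rw [norm_mul]
  calc ‖tpow d n σ x y‖ * ‖M y x‖ ≤ 1 * ‖M y x‖ := by gcongr; exact norm_tpow_le hσ x y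
    _ = ‖M y x‖ := one_mul _

theorem twirling_lemma (d n l : ℕ) (hd : 1 ≤ d) (hn : 1 ≤ n)
    (H : Subgroup (Matrix.unitaryGroup (Fin d) ℂ))
    (hclosed : IsClosed (carrier d H))
    -- μ is the Haar probability measure of H, viewed as a measure on matrices
    (μ : Measure (Matrix (Fin d) (Fin d) ℂ)) [IsProbabilityMeasure μ]
    (hμsupp : μ (carrier d H)ᶜ = 0)
    (hμinv : ∀ V ∈ carrier d H, Measure.map (fun W => V * W) μ = μ)
    -- p is a prior over density matrices, invariant under H
    (p : Measure (Matrix (Fin d) (Fin d) ℂ)) [IsProbabilityMeasure p]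
    (hpsupp : p {ρ | ¬ (ρ.PosSemidef ∧ ρ.trace = 1)} = 0)
    (hpinv : ∀ V ∈ carrier d H, Measure.map (fun ρ => V * ρ * Vᴴ) p = p)
    -- the parameters s are Borel measurable and invariant under H
    (s : Matrix (Fin d) (Fin d) ℂ → (Fin l → ℝ)) (hs : Measurable s)
    (hsinv : ∀ V ∈ carrier d H, ∀ ρ, s (V * ρ * Vᴴ) = s ρ)
    (M : MatN d n) :
    ∀ Δ : Set (Fin l → ℝ), MeasurableSet Δ →
      ∫ ρ in {ρ | s ρ ∈ Δ},
          (tpow d n ρ *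
            (Matrix.of fun x y => ∫ V, (tpow d n V * M * (tpow d n V)ᴴ) x y ∂μ)).trace ∂p
      = ∫ ρ in {ρ | s ρ ∈ Δ}, (tpow d n ρ * M).trace ∂p := by
  intro Δ hΔ
  have hSmeas : MeasurableSet {ρ : Matrix (Fin d) (Fin d) ℂ | s ρ ∈ Δ} := hs hΔ
  set S := {ρ : Matrix (Fin d) (Fin d) ℂ | s ρ ∈ Δ} with hSdef
  set C1 : ℝ := ∑ a : Fin n → Fin d, ∑ b : Fin n → Fin d, ‖M a b‖ with hC1
  set C2 : ℝ := ∑ x : Fin n → Fin d, ∑ y : Fin n → Fin d, ‖M y x‖ with hC2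
  have hμcar : ∀ᵐ V ∂μ, V ∈ carrier d H := by
    rw [MeasureTheory.ae_iff]
    exact hμsupp
  have hVbound : ∀ V ∈ carrier d H, ∀ i j, ‖V i j‖ ≤ 1 := by
    rintro V ⟨U, hU, rfl⟩ i j
    refine unitary_entry_norm_le ?_ i j
    have := Matrix.mem_unitaryGroup_iff.1 U.2
    rwa [Matrix.star_eq_conjTranspose] at this
  have hunit : ∀ V ∈ carrier d H, V * Vᴴ = 1 := by
    rintro V ⟨U, hU, rfl⟩
    have := Matrix.mem_unitaryGroup_iff.1 U.2
    rwa [Matrix.star_eq_conjTranspose] at this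
  have hI1 : ∀ x y : Fin n → Fin d,
      Integrable (fun V => (tpow d n V * M * (tpow d n V)ᴴ) x y) μ := by
    intro x y
    refine Integrable.mono' (integrable_const C1)
      ((measurable_conj_entry M x y).aestronglyMeasurable) ?_
    filter_upwards [hμcar] with V hV
    exact norm_conj_entry_le M (hVbound V hV) x y
  -- Step 1+2: pointwise identity
  have hstep : ∀ ρ : Matrix (Fin d) (Fin d) ℂ,
      (tpow d n ρ *
        (Matrix.of fun x y => ∫ V, (tpow d n V * M * (tpow d n V)ᴴ) x y ∂μ)).trace
      = ∫ V, (tpow d n (Vᴴ * ρ * V) * M).trace ∂μ := by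
    intro ρ
    have e1 : ∀ V : Matrix (Fin d) (Fin d) ℂ, (tpow d n (Vᴴ * ρ * V) * M).trace
        = (tpow d n ρ * (tpow d n V * M * (tpow d n V)ᴴ)).trace := by
      intro V
      rw [tpow_mul, tpow_mul, tpow_conjTranspose]
      set A := tpow d n V
      set X := tpow d n ρ
      calc (Aᴴ * X * A * M).trace
          = ((Aᴴ * X) * (A * M)).trace := by rw [mul_assoc (Aᴴ * X) A M]
        _ = ((A * M) * (Aᴴ * X)).trace := Matrix.trace_mul_comm _ _
        _ = ((A * M * Aᴴ) * X).trace := by rw [mul_assoc (A * M) Aᴴ X]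
        _ = (X * (A * M * Aᴴ)).trace := Matrix.trace_mul_comm _ _
    rw [trace_mul_sum]
    simp only [Matrix.of_apply]
    have h4 : ∀ x y : Fin n → Fin d,
        tpow d n ρ x y * ∫ V, (tpow d n V * M * (tpow d n V)ᴴ) y x ∂μ
        = ∫ V, tpow d n ρ x y * (tpow d n V * M * (tpow d n V)ᴴ) y x ∂μ :=
      fun x y => (integral_const_mul _ _).symm
    simp only [h4]
    have h5 : ∀ x : Fin n → Fin d,
        (∑ y, ∫ V, tpow d n ρ x y * (tpow d n V * M * (tpow d n V)ᴴ) y x ∂μ)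
        = ∫ V, ∑ y, tpow d n ρ x y * (tpow d n V * M * (tpow d n V)ᴴ) y x ∂μ :=
      fun x => (integral_finset_sum _ (fun y _ => (hI1 y x).const_mul _)).symm
    simp only [h5]
    rw [← integral_finset_sum _ (fun x _ =>
      integrable_finset_sum _ (fun y _ => (hI1 y x).const_mul (tpow d n ρ x y)))]
    refine integral_congr_ae (Filter.Eventually.of_forall fun V => ?_)
    simp only [e1, trace_mul_sum]
  calc ∫ ρ in S, (tpow d n ρ *
          (Matrix.of fun x y => ∫ V, (tpow d n V * M * (tpow d n V)ᴴ) x y ∂μ)).trace ∂p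
      = ∫ ρ in S, ∫ V, (tpow d n (Vᴴ * ρ * V) * M).trace ∂μ ∂p :=
        integral_congr_ae (Filter.Eventually.of_forall fun ρ => hstep ρ)
    _ = ∫ V, ∫ ρ in S, (tpow d n (Vᴴ * ρ * V) * M).trace ∂p ∂μ := by
        refine integral_integral_swap ?_
        refine Integrable.mono' (integrable_const C2)
          ((measurable_trace_conj M).aestronglyMeasurable) ?_
        have hbadp : ((p.restrict S).prod μ)
            ({ρ : Matrix (Fin d) (Fin d) ℂ | ¬(ρ.PosSemidef ∧ ρ.trace = 1)} ×ˢ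
              (Set.univ : Set (Matrix (Fin d) (Fin d) ℂ))) = 0 := by
          rw [Measure.prod_prod]
          have : p.restrict S {ρ : Matrix (Fin d) (Fin d) ℂ | ¬(ρ.PosSemidef ∧ ρ.trace = 1)}
              = 0 :=
            le_antisymm ((Measure.restrict_apply_le _ _).trans hpsupp.le) (zero_le')
          rw [this, zero_mul]
        have hbadμ : ((p.restrict S).prod μ)
            ((Set.univ : Set (Matrix (Fin d) (Fin d) ℂ)) ×ˢ (carrier d H)ᶜ) = 0 := by
          rw [Measure.prod_prod]
          simp [hμsupp]
        have hae : ∀ᵐ q ∂((p.restrict S).prod μ),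
            (q.1.PosSemidef ∧ q.1.trace = 1) ∧ q.2 ∈ carrier d H := by
          rw [MeasureTheory.ae_iff]
          refine measure_mono_null ?_ (measure_union_null hbadp hbadμ)
          intro q hq
          rcases not_and_or.1 hq with h | h
          · exact Or.inl ⟨h, Set.mem_univ _⟩
          · exact Or.inr ⟨Set.mem_univ _, h⟩
        filter_upwards [hae] with q hq
        have hσ : (q.2ᴴ * q.1 * q.2).PosSemidef := hq.1.1.conjTranspose_mul_mul_same q.2
        have htrσ : (q.2ᴴ * q.1 * q.2).trace = 1 := by
          rw [Matrix.trace_mul_cycle, hunit q.2 hq.2, one_mul, hq.1.2]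
        exact norm_trace_le M (fun i j => psd_entry_norm_le hσ htrσ i j)
    _ = ∫ _ : Matrix (Fin d) (Fin d) ℂ, (∫ ρ in S, (tpow d n ρ * M).trace ∂p) ∂μ := by
        refine integral_congr_ae ?_
        filter_upwards [hμcar] with V hV
        obtain ⟨U, hU, rfl⟩ := hV
        set W := ((U : Matrix.unitaryGroup (Fin d) ℂ) : Matrix (Fin d) (Fin d) ℂ) with hW
        have hWH : Wᴴ ∈ carrier d H := by
          refine ⟨U⁻¹, H.inv_mem hU, ?_⟩
          rw [← Unitary.star_eq_inv, Unitary.coe_star, hW, Matrix.star_eq_conjTranspose]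
        have hmap := hpinv Wᴴ hWH
        rw [Matrix.conjTranspose_conjTranspose] at hmap
        have hpre : (fun ρ => Wᴴ * ρ * W) ⁻¹' S = S := by
          ext ρ
          have := hsinv Wᴴ hWH ρ
          rw [Matrix.conjTranspose_conjTranspose] at this
          simp [hSdef, Set.mem_preimage, this]
        conv_rhs => rw [← hmap]
        rw [setIntegral_map hSmeas (measurable_trace_tpow M).aestronglyMeasurable
          (measurable_sandwich W).aemeasurable, hpre]
    _ = ∫ ρ in S, (tpow d n ρ * M).trace ∂p := by
        rw [integral_const]
        simp
end
end

section
/- Failure of the duality for a non-gauge group (spin-1 representation): let ψ : (Fin 2 → Fin 3) → ℂ be defined by ψ(x) = 1 if x 0 = x 1 and 0 otherwise (the unnormalized vector ∑_i e_i⊗e_i in ℂ³⊗ℂ³), and let X be the rank-one matrix on ℂ³⊗ℂ³ with entries X(x,y) = ψ(x)·conj(ψ(y)). Then: (i) for every real 3×3 matrix R with R·Rᵀ = 1 and det R = 1 (i.e. R ∈ SO(3)), the complexification Rℂ of R satisfies (Rℂ ⊗ Rℂ)·X = X·(Rℂ ⊗ Rℂ); (ii) Swap·X = X·Swap; (iii)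 X is not a ℂ-linear combination of the identity matrix and Swap. Consequently, the commutant of {Rℂ⊗Rℂ : R ∈ SO(3)} on ℂ³⊗ℂ³ is strictly larger than the ℂ-subalgebra generated by the permutation operators {1, Swap}. -/
/- Failure of the duality for a non-gauge group: the maximally entangled
(unnormalized) vector ψ = ∑ᵢ eᵢ ⊗ eᵢ in ℂ³ ⊗ ℂ³ gives a rank-one operator X
commuting with R ⊗ R for every R ∈ SO(3) and with Swap, yet X is not a linear
combination of 1 and Swap; hence the commutant of the collective SO(3) action
is strictly larger than the algebra generated by the permutation operators. -/

open Matrix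

noncomputable section

/-- Matrices on ℂ³ ⊗ ℂ³, indexed by functions x : Fin 2 → Fin 3. -/
abbrev Mat33 := Matrix (Fin 2 → Fin 3) (Fin 2 → Fin 3) ℂ

/-- The tensor product V ⊗ W of two matrices on ℂ³. -/
def kron33 (V W : Matrix (Fin 3) (Fin 3) ℂ) : Mat33 :=
  Matrix.of fun x y => V (x 0) (y 0) * W (x 1) (y 1)

/-- The swap operator on ℂ³ ⊗ ℂ³. -/
def swap33 : Mat33 :=
  Matrix.of fun x y => if x 0 = y 1 ∧ x 1 = y 0 then 1 else 0

/-- The unnormalized maximally entangled vector ∑ᵢ eᵢ ⊗ eᵢ. -/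
def psi : (Fin 2 → Fin 3) → ℂ := fun x => if x 0 = x 1 then 1 else 0

/-- The rank-one operator |ψ⟩⟨ψ|. -/
def Xmat : Mat33 := Matrix.of fun x y => psi x * star (psi y)

lemma eta2 (z : Fin 2 → Fin 3) : ![z 0, z 1] = z := by
  funext i; fin_cases i <;> rfl

lemma sum_fn (f : (Fin 2 → Fin 3) → ℂ) :
    ∑ z : Fin 2 → Fin 3, f z = ∑ i : Fin 3, ∑ j : Fin 3, f ![i, j] := by
  rw [← Fintype.sum_prod_type']
  refine Fintype.sum_equiv (finTwoArrowEquiv (Fin 3)) f (fun p => f ![p.1, p.2]) (fun z => ?_)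
  simp [finTwoArrowEquiv, eta2]

lemma swap_apply (x y : Fin 2 → Fin 3) :
    swap33 x y = if y = ![x 1, x 0] then 1 else 0 := by
  simp only [swap33, of_apply]
  congr 1
  simp only [eq_iff_iff]
  constructor
  · rintro ⟨h1, h2⟩; funext i; fin_cases i <;> simp [← h1, ← h2]
  · rintro rfl; simp

lemma swap_apply' (x y : Fin 2 → Fin 3) :
    swap33 x y = if x = ![y 1, y 0] then 1 else 0 := by
  simp only [swap33, of_apply]
  congr 1
  simp only [eq_iff_iff]
  constructor
  · rintro ⟨h1, h2⟩; funext i; fin_cases i <;> simp [h1, h2]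
  · rintro rfl; simp [and_comm]

lemma kronX (A : Matrix (Fin 3) (Fin 3) ℂ) (hA : A * Aᵀ = 1) :
    kron33 A A * Xmat = Xmat := by
  ext x y
  rw [mul_apply, sum_fn]
  have h1 : ∑ i : Fin 3, A (x 0) i * A (x 1) i = if x 0 = x 1 then 1 else 0 := by
    have := congrFun (congrFun hA (x 0)) (x 1)
    simpa [mul_apply, one_apply, transpose_apply] using this
  simp only [kron33, Xmat, psi, of_apply, Matrix.cons_val_zero, Matrix.cons_val_one,
    Matrix.head_cons, mul_ite, ite_mul, mul_one, mul_zero, zero_mul, one_mul,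
    Finset.sum_ite_eq, Finset.sum_ite_eq', Finset.mem_univ, if_true]
  change (∑ i : Fin 3, ∑ j : Fin 3, A (x 0) i * A (x 1) j *
    if i = j then star (if y 0 = y 1 then (1:ℂ) else 0) else 0) = _
  simp only [mul_ite, mul_zero, Finset.sum_ite_eq, Finset.mem_univ, if_true]
  rw [← Finset.sum_mul, h1]
  split <;> simp [h1]

lemma Xkron (A : Matrix (Fin 3) (Fin 3) ℂ) (hA : Aᵀ * A = 1) :
    Xmat * kron33 A A = Xmat := by
  ext x y
  rw [mul_apply, sum_fn]
  have h1 : ∑ i : Fin 3, A i (y 0) * A i (y 1) = if y 0 = y 1 then 1 else 0 := by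
    have := congrFun (congrFun hA (y 0)) (y 1)
    simpa [mul_apply, one_apply, transpose_apply] using this
  simp only [kron33, Xmat, psi, of_apply, Matrix.cons_val_zero, Matrix.cons_val_one,
    Matrix.head_cons, apply_ite star, star_one, star_zero, mul_ite, ite_mul,
    mul_one, mul_zero, zero_mul, one_mul,
    Finset.sum_ite_eq, Finset.sum_ite_eq', Finset.mem_univ, if_true]
  split <;> simp [h1]

lemma swap_sq : swap33 * swap33 = 1 := by
  ext x y
  rw [mul_apply]
  simp only [swap_apply, ite_mul, one_mul, zero_mul, Finset.sum_ite_eq',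
    Finset.mem_univ, if_true, one_apply]
  simp [eta2, eq_comm]

lemma swap_mul_kron (A B : Matrix (Fin 3) (Fin 3) ℂ) :
    swap33 * kron33 A B = kron33 B A * swap33 := by
  ext x y
  have L : (swap33 * kron33 A B) x y = A (x 1) (y 0) * B (x 0) (y 1) := by
    rw [mul_apply]
    simp only [swap_apply, ite_mul, one_mul, zero_mul, Finset.sum_ite_eq',
      Finset.mem_univ, if_true, kron33, of_apply]
    simp
  have Rr : (kron33 B A * swap33) x y = B (x 0) (y 1) * A (x 1) (y 0) := by
    rw [mul_apply]
    simp only [swap_apply', mul_ite, mul_one, mul_zero, Finset.sum_ite_eq',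
      Finset.mem_univ, if_true, kron33, of_apply]
    simp
  rw [L, Rr, mul_comm]

lemma swapX : swap33 * Xmat = Xmat := by
  ext x y
  rw [mul_apply]
  simp only [swap_apply, ite_mul, one_mul, zero_mul, Finset.sum_ite_eq',
    Finset.mem_univ, if_true, Xmat, psi, of_apply]
  simp [eq_comm]

lemma Xswap : Xmat * swap33 = Xmat := by
  ext x y
  rw [mul_apply]
  simp only [swap_apply', mul_ite, mul_one, mul_zero, Finset.sum_ite_eq',
    Finset.mem_univ, if_true, Xmat, psi, of_apply]
  simp [eq_comm]

lemma ortho_c (R : Matrix (Fin 3) (Fin 3) ℝ) (hR : R * Rᵀ = 1) :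
    (R.map Complex.ofReal) * (R.map Complex.ofReal)ᵀ = 1 := by
  have h := congrArg (fun M : Matrix (Fin 3) (Fin 3) ℝ => M.map (Complex.ofRealHom : ℝ →+* ℂ)) hR
  simp only [Matrix.map_mul] at h
  have he : R.map Complex.ofReal = R.map (Complex.ofRealHom : ℝ →+* ℂ) := rfl
  rw [he]
  simpa [Matrix.transpose_map] using h

lemma part1 (R : Matrix (Fin 3) (Fin 3) ℝ) (hR : R * Rᵀ = 1) :
    kron33 (R.map Complex.ofReal) (R.map Complex.ofReal) * Xmat
      = Xmat * kron33 (R.map Complex.ofReal) (R.map Complex.ofReal) := by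
  set A := R.map Complex.ofReal
  have hA : A * Aᵀ = 1 := ortho_c R hR
  have hA' : Aᵀ * A = 1 := mul_eq_one_comm.mp hA
  rw [kronX A hA, Xkron A hA']

lemma part3 : ¬ ∃ a b : ℂ, Xmat = a • (1 : Mat33) + b • swap33 := by
  rintro ⟨a, b, hab⟩
  have hne : (![0,0] : Fin 2 → Fin 3) ≠ ![1,1] := by
    intro h; simpa using congrFun h 0
  have h := congrFun (congrFun hab ![0,0]) ![1,1]
  simp [Xmat, psi, swap33, one_apply, hne] at h

lemma part4help : ∀ Y ∈ Algebra.adjoin ℂ ({swap33} : Set Mat33),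
    ∃ a b : ℂ, Y = a • (1 : Mat33) + b • swap33 := by
  intro Y hY
  induction hY using Algebra.adjoin_induction with
  | mem z hz =>
      rcases hz with rfl
      exact ⟨0, 1, by simp⟩
  | algebraMap r =>
      exact ⟨r, 0, by simp [Algebra.algebraMap_eq_smul_one]⟩
  | add u v hu hv ihu ihv =>
      obtain ⟨a, b, rfl⟩ := ihu
      obtain ⟨c, d, rfl⟩ := ihv
      exact ⟨a + c, b + d, by module⟩
  | mul u v hu hv ihu ihv =>
      obtain ⟨a, b, rfl⟩ := ihu
      obtain ⟨c, d, rfl⟩ := ihv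
      refine ⟨a * c + b * d, a * d + b * c, ?_⟩
      simp only [add_mul, mul_add, Matrix.smul_mul, Matrix.mul_smul, smul_smul,
        one_mul, mul_one, swap_sq]
      module

theorem so3_not_gauge_counterexample :
    (∀ R : Matrix (Fin 3) (Fin 3) ℝ, R * Rᵀ = 1 → R.det = 1 →
      kron33 (R.map Complex.ofReal) (R.map Complex.ofReal) * Xmat
        = Xmat * kron33 (R.map Complex.ofReal) (R.map Complex.ofReal)) ∧
    swap33 * Xmat = Xmat * swap33 ∧
    (¬ ∃ a b : ℂ, Xmat = a • (1 : Mat33) + b • swap33) ∧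
    (Algebra.adjoin ℂ ({swap33} : Set Mat33) : Set Mat33)
      ⊂ {Y : Mat33 | ∀ R : Matrix (Fin 3) (Fin 3) ℝ, R * Rᵀ = 1 → R.det = 1 →
          kron33 (R.map Complex.ofReal) (R.map Complex.ofReal) * Y
            = Y * kron33 (R.map Complex.ofReal) (R.map Complex.ofReal)} := by
  refine ⟨fun R hR _ => part1 R hR, by rw [swapX, Xswap], part3, ?_⟩
  constructor
  · intro Y hY R hR hdet
    obtain ⟨a, b, rfl⟩ := part4help Y hY
    have hc : kron33 (R.map Complex.ofReal) (R.map Complex.ofReal) * swap33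
        = swap33 * kron33 (R.map Complex.ofReal) (R.map Complex.ofReal) :=
      (swap_mul_kron _ _).symm
    simp only [mul_add, add_mul, Matrix.mul_smul, Matrix.smul_mul, mul_one, one_mul, hc]
  · intro hcon
    have hX : Xmat ∈ {Y : Mat33 | ∀ R : Matrix (Fin 3) (Fin 3) ℝ, R * Rᵀ = 1 → R.det = 1 →
          kron33 (R.map Complex.ofReal) (R.map Complex.ofReal) * Y
            = Y * kron33 (R.map Complex.ofReal) (R.map Complex.ofReal)} :=
      fun R hR _ => part1 R hR
    exact part3 (part4help Xmat (hcon hX))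

end
end

section
/- Failure of the symmetric/antisymmetric-subspace duality for other irreducible representations of the permutation group: work on (ℂ⁴)^{⊗3} with ℂ⁴ identified with ℂ²⊗ℂ² (matrices indexed by functions x : Fin 3 → Fin 2 × Fin 2). Let Π_λ := 1 − Π₊ − Π₋ be the orthogonal projector onto the isotypic component of the two-dimensional irreducible representation of S₃. Then there exists a matrix M on (ℂ⁴)^{⊗3} such that: (i) Π_λ·M·Π_λ commutes with P(σ) for every permutation σ of Fin 3; (ii) Π_λ·M·Π_λ commutes with (V⊗I₂)^{⊗3} for every V in the unitary group U(2); (iii) Π_λ·M·Π_λ does NOT belong to the smallest ℂ-linear subspace containing {Π_λ·(I₂⊗W)^{⊗3}·Π_λ : W ∈ U(2)} that is closed under matrix multiplication (the non-unital subalgebra generated by this set). -/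
/- Failure of the symmetric/antisymmetric-subspace duality for the
two-dimensional irreducible representation of S₃ : on (ℂ⁴)^{⊗3} with
ℂ⁴ ≅ ℂ² ⊗ ℂ², there is an operator Π_λ·M·Π_λ which is permutationally invariant
and commutes with the collective action of U(2) on the left factors, but does
not lie in the (non-unital) subalgebra generated by the projected collective
action of U(2) on the right factors. -/

open Matrix

noncomputable section

/-- Matrices on (ℂ⁴)^{⊗3}, with ℂ⁴ ≅ ℂ² ⊗ ℂ². -/
abbrev Mat43 := Matrix (Fin 3 → Fin 2 × Fin 2) (Fin 3 → Fin 2 × Fin 2) ℂ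

/-- The tensor product V ⊗ W of two matrices on ℂ², as a matrix on ℂ⁴. -/
def kron22 (V W : Matrix (Fin 2) (Fin 2) ℂ) :
    Matrix (Fin 2 × Fin 2) (Fin 2 × Fin 2) ℂ :=
  Matrix.of fun p q => V p.1 q.1 * W p.2 q.2

/-- The 3-fold tensor power U^{⊗3} of a matrix U on ℂ⁴. -/
def tpow3 (U : Matrix (Fin 2 × Fin 2) (Fin 2 × Fin 2) ℂ) : Mat43 :=
  Matrix.of fun x y => ∏ i, U (x i) (y i)

/-- The permutation operator P(σ) on (ℂ⁴)^{⊗3}. -/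
def permMat3 (σ : Equiv.Perm (Fin 3)) : Mat43 :=
  Matrix.of fun x y => if x = y ∘ ⇑σ⁻¹ then 1 else 0

/-- Π₊ : the projector onto the symmetric subspace of (ℂ⁴)^{⊗3}. -/
def symProj3 : Mat43 :=
  ((Nat.factorial 3 : ℂ))⁻¹ • ∑ σ : Equiv.Perm (Fin 3), permMat3 σ

/-- Π₋ : the projector onto the antisymmetric subspace of (ℂ⁴)^{⊗3}. -/
def antisymProj3 : Mat43 :=
  ((Nat.factorial 3 : ℂ))⁻¹ • ∑ σ : Equiv.Perm (Fin 3),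
    ((Equiv.Perm.sign σ : ℤ) : ℂ) • permMat3 σ

/-- Π_λ : the projector onto the isotypic component of the two-dimensional
irreducible representation of S₃. -/
def lamProj : Mat43 := 1 - symProj3 - antisymProj3

-- ### auxiliary definitions
abbrev IdxT := Fin 3 → Fin 2 × Fin 2
abbrev M2C := Matrix (Fin 2) (Fin 2) ℂ

/-- site-wise operator -/
def gop (f : Fin 3 → Matrix (Fin 2 × Fin 2) (Fin 2 × Fin 2) ℂ) : Mat43 :=
  Matrix.of fun x y => ∏ i, f i (x i) (y i)

def gopB (g : Fin 3 → M2C) : Mat43 := gop (fun i => kron22 1 (g i))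

def bmap (σ : Equiv.Perm (Fin 3)) (y : IdxT) : IdxT := fun i => ((y i).1, (y (σ i)).2)

/-- permutation operator acting only on the second (B) factors -/
def bperm (σ : Equiv.Perm (Fin 3)) : Mat43 :=
  Matrix.of fun x y => if x = bmap σ⁻¹ y then 1 else 0

lemma tpow3_eq_gop (U) : tpow3 U = gop (fun _ => U) := rfl

-- ### closed forms for products
lemma comp_cancel_iff (σ : Equiv.Perm (Fin 3)) {x w : IdxT} :
    x = w ∘ ⇑σ⁻¹ ↔ w = x ∘ ⇑σ := by
  constructor
  · rintro rfl; funext i; simp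
  · rintro rfl; funext i; simp

lemma bmap_cancel_iff (σ : Equiv.Perm (Fin 3)) {x w : IdxT} :
    x = bmap σ⁻¹ w ↔ w = bmap σ x := by
  constructor
  · rintro rfl; funext i; simp [bmap]
  · rintro rfl; funext i; simp [bmap]

lemma perm_mul (σ : Equiv.Perm (Fin 3)) (A : Mat43) :
    permMat3 σ * A = Matrix.of fun x y => A (x ∘ ⇑σ) y := by
  ext x y
  rw [Matrix.mul_apply]
  simp only [permMat3, Matrix.of_apply, comp_cancel_iff σ]
  simp [ite_mul]

lemma mul_perm (σ : Equiv.Perm (Fin 3)) (A : Mat43) :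
    A * permMat3 σ = Matrix.of fun x y => A x (y ∘ ⇑σ⁻¹) := by
  ext x y
  rw [Matrix.mul_apply]
  simp only [permMat3, Matrix.of_apply]
  simp [mul_ite]

lemma bperm_mul (σ : Equiv.Perm (Fin 3)) (A : Mat43) :
    bperm σ * A = Matrix.of fun x y => A (bmap σ x) y := by
  ext x y
  rw [Matrix.mul_apply]
  simp only [bperm, Matrix.of_apply, bmap_cancel_iff σ]
  simp [ite_mul]

lemma mul_bperm (σ : Equiv.Perm (Fin 3)) (A : Mat43) :
    A * bperm σ = Matrix.of fun x y => A x (bmap σ⁻¹ y) := by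
  ext x y
  rw [Matrix.mul_apply]
  simp only [bperm, Matrix.of_apply]
  simp [mul_ite]

lemma perm_mul_perm (σ τ : Equiv.Perm (Fin 3)) :
    permMat3 σ * permMat3 τ = permMat3 (σ * τ) := by
  rw [perm_mul]
  ext x y
  simp only [permMat3, Matrix.of_apply]
  congr 1
  rw [eq_iff_iff]
  constructor
  · intro h; funext i
    have := congrFun h (σ⁻¹ i)
    simpa [Equiv.Perm.mul_apply] using this
  · intro h; funext i
    have := congrFun h (σ i)
    simpa [Equiv.Perm.mul_apply] using this

lemma permMat3_one : permMat3 (1 : Equiv.Perm (Fin 3)) = 1 := by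
  ext x y
  simp only [permMat3, Matrix.of_apply, Matrix.one_apply]
  congr 1

lemma gop_mul_gop (f g : Fin 3 → Matrix (Fin 2 × Fin 2) (Fin 2 × Fin 2) ℂ) :
    gop f * gop g = gop (fun i => f i * g i) := by
  ext x y
  rw [Matrix.mul_apply]
  simp only [gop, Matrix.of_apply]
  calc ∑ z : IdxT, (∏ i, f i (x i) (z i)) * ∏ i, g i (z i) (y i)
      = ∑ z : IdxT, ∏ i, (f i (x i) (z i) * g i (z i) (y i)) := by
        refine Finset.sum_congr rfl fun z _ => ?_
        rw [Finset.prod_mul_distrib]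
    _ = ∑ z ∈ Fintype.piFinset (fun _ : Fin 3 => (Finset.univ : Finset (Fin 2 × Fin 2))),
          ∏ i, (f i (x i) (z i) * g i (z i) (y i)) := by rw [Fintype.piFinset_univ]
    _ = ∏ i, ∑ c : Fin 2 × Fin 2, f i (x i) c * g i c (y i) :=
        (Finset.prod_univ_sum (fun _ => Finset.univ)
          (fun i c => f i (x i) c * g i c (y i))).symm
    _ = ∏ i, (f i * g i) (x i) (y i) := by
        refine Finset.prod_congr rfl fun i _ => ?_
        rw [Matrix.mul_apply]

lemma kron22_mul (V W V' W' : M2C) :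
    kron22 V W * kron22 V' W' = kron22 (V * V') (W * W') := by
  ext p q
  rw [Matrix.mul_apply]
  simp only [kron22, Matrix.of_apply]
  rw [Fintype.sum_prod_type, Matrix.mul_apply, Matrix.mul_apply, Finset.sum_mul_sum]
  refine Finset.sum_congr rfl fun r _ => Finset.sum_congr rfl fun s _ => ?_
  ring

lemma perm_gop (σ : Equiv.Perm (Fin 3)) (f : Fin 3 → Matrix (Fin 2 × Fin 2) (Fin 2 × Fin 2) ℂ) :
    permMat3 σ * gop f = gop (fun i => f (σ⁻¹ i)) * permMat3 σ := by
  rw [perm_mul, mul_perm]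
  ext x y
  simp only [gop, Matrix.of_apply, Function.comp_apply]
  calc ∏ i, f i (x (σ i)) (y i)
      = ∏ i, f (σ⁻¹ i) (x (σ (σ⁻¹ i))) (y (σ⁻¹ i)) :=
        (Equiv.prod_comp σ⁻¹ (fun j => f j (x (σ j)) (y j))).symm
    _ = ∏ i, f (σ⁻¹ i) (x i) (y (σ⁻¹ i)) := by
        refine Finset.prod_congr rfl fun i _ => ?_
        rw [← Equiv.Perm.mul_apply, mul_inv_cancel, Equiv.Perm.one_apply]

lemma gop_perm (σ : Equiv.Perm (Fin 3)) (f : Fin 3 → Matrix (Fin 2 × Fin 2) (Fin 2 × Fin 2) ℂ) :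
    gop f * permMat3 σ = permMat3 σ * gop (fun i => f (σ i)) := by
  rw [perm_gop σ (fun i => f (σ i))]
  have : (fun i => f (σ (σ⁻¹ i))) = f := funext fun i => by rw [← Equiv.Perm.mul_apply, mul_inv_cancel, Equiv.Perm.one_apply]
  rw [this]

lemma bperm_gopB (σ : Equiv.Perm (Fin 3)) (g : Fin 3 → M2C) :
    bperm σ * gopB g = gopB (fun i => g (σ⁻¹ i)) * bperm σ := by
  rw [bperm_mul, mul_bperm]
  ext x y
  simp only [gopB, gop, Matrix.of_apply, kron22, bmap]
  calc ∏ i, (1 : M2C) (x i).1 (y i).1 * g i ((x (σ i)).2) ((y i).2)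
      = (∏ i, (1 : M2C) (x i).1 (y i).1) * ∏ i, g i ((x (σ i)).2) ((y i).2) := by
        rw [Finset.prod_mul_distrib]
    _ = (∏ i, (1 : M2C) (x i).1 (y i).1) * ∏ i, g (σ⁻¹ i) ((x i).2) ((y (σ⁻¹ i)).2) := by
        congr 1
        calc ∏ i, g i ((x (σ i)).2) ((y i).2)
            = ∏ i, g (σ⁻¹ i) ((x (σ (σ⁻¹ i))).2) ((y (σ⁻¹ i)).2) :=
              (Equiv.prod_comp σ⁻¹ (fun j => g j ((x (σ j)).2) ((y j).2))).symm
          _ = ∏ i, g (σ⁻¹ i) ((x i).2) ((y (σ⁻¹ i)).2) := by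
              refine Finset.prod_congr rfl fun i _ => ?_
              rw [← Equiv.Perm.mul_apply, mul_inv_cancel, Equiv.Perm.one_apply]
    _ = ∏ i, (1 : M2C) (x i).1 (y i).1 * g (σ⁻¹ i) ((x i).2) ((y (σ⁻¹ i)).2) := by
        rw [Finset.prod_mul_distrib]

lemma gopB_bperm (σ : Equiv.Perm (Fin 3)) (g : Fin 3 → M2C) :
    gopB g * bperm σ = bperm σ * gopB (fun i => g (σ i)) := by
  rw [bperm_gopB σ (fun i => g (σ i))]
  have : (fun i => g (σ (σ⁻¹ i))) = g := funext fun i => by rw [← Equiv.Perm.mul_apply, mul_inv_cancel, Equiv.Perm.one_apply]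
  rw [this]

lemma perm_bperm (τ σ : Equiv.Perm (Fin 3)) :
    permMat3 τ * bperm σ = bperm (τ * σ * τ⁻¹) * permMat3 τ := by
  rw [perm_mul, mul_perm]
  ext x y
  simp only [bperm, Matrix.of_apply]
  congr 1
  rw [eq_iff_iff]
  constructor
  · intro h; funext i
    have := congrFun h (τ⁻¹ i)
    simpa [bmap, Equiv.Perm.mul_apply, Function.comp] using this
  · intro h; funext i
    have := congrFun h (τ i)
    simpa [bmap, Equiv.Perm.mul_apply, Function.comp] using this

-- ### the operator M and the witness operator R
def Xc : M2C := !![0, 1; 0, 0]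

def gg (σ : Equiv.Perm (Fin 3)) : Fin 3 → M2C := fun k => if σ k = k then 1 else Xc

def cc (σ : Equiv.Perm (Fin 3)) : ℂ := if σ⁻¹ = σ ∧ σ ≠ 1 then 1 else 0

def Mmat : Mat43 := ∑ σ : Equiv.Perm (Fin 3), cc σ • (permMat3 σ * gopB (gg σ))

def Rmat : Mat43 := ∑ σ : Equiv.Perm (Fin 3), bperm σ

lemma gopB_perm (σ : Equiv.Perm (Fin 3)) (g : Fin 3 → M2C) :
    gopB g * permMat3 σ = permMat3 σ * gopB (fun i => g (σ i)) :=
  gop_perm σ (fun i => kron22 1 (g i))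

lemma cc_conj (τ σ : Equiv.Perm (Fin 3)) : cc (τ * σ * τ⁻¹) = cc σ := by
  unfold cc
  congr 1
  rw [eq_iff_iff]
  have h1 : (τ * σ * τ⁻¹)⁻¹ = τ * σ⁻¹ * τ⁻¹ := by group
  constructor
  · rintro ⟨h, hne⟩
    rw [h1] at h
    refine ⟨mul_left_cancel (mul_right_cancel h), fun h0 => hne ?_⟩
    rw [h0]; group
  · rintro ⟨h, hne⟩
    refine ⟨by rw [h1, h], fun h0 => hne ?_⟩
    have : τ⁻¹ * (τ * σ * τ⁻¹) * τ = τ⁻¹ * 1 * τ := by rw [h0]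
    calc σ = τ⁻¹ * (τ * σ * τ⁻¹) * τ := by group
    _ = τ⁻¹ * 1 * τ := this
    _ = 1 := by group

lemma gg_comp (σ τ : Equiv.Perm (Fin 3)) :
    (fun i => gg σ (τ i)) = gg (τ⁻¹ * σ * τ) := by
  funext k
  unfold gg
  congr 1
  rw [eq_iff_iff, Equiv.Perm.mul_apply, Equiv.Perm.mul_apply]
  constructor
  · intro h; rw [h]; exact τ.symm_apply_apply k
  · intro h
    have := congrArg τ h
    simpa using this

lemma M_comm_perm (τ : Equiv.Perm (Fin 3)) :
    permMat3 τ * Mmat = Mmat * permMat3 τ := by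
  unfold Mmat
  rw [Finset.mul_sum, Finset.sum_mul]
  refine Fintype.sum_bijective (fun σ => τ * σ * τ⁻¹) (MulAut.conj τ).bijective _ _ fun σ => ?_
  rw [mul_smul_comm, smul_mul_assoc, cc_conj]
  congr 1
  rw [mul_assoc (permMat3 (τ * σ * τ⁻¹)), gopB_perm, ← mul_assoc (permMat3 (τ * σ * τ⁻¹)),
    perm_mul_perm, ← mul_assoc, perm_mul_perm]
  have e1 : τ * σ * τ⁻¹ * τ = τ * σ := by group
  have e2 : (fun i => gg (τ * σ * τ⁻¹) (τ i)) = gg σ := by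
    rw [gg_comp]
    congr 1
    group
  rw [e1, e2]

lemma R_comm_perm (τ : Equiv.Perm (Fin 3)) :
    permMat3 τ * Rmat = Rmat * permMat3 τ := by
  unfold Rmat
  rw [Finset.mul_sum, Finset.sum_mul]
  refine Fintype.sum_bijective (fun σ => τ * σ * τ⁻¹) (MulAut.conj τ).bijective _ _ fun σ => ?_
  exact perm_bperm τ σ

lemma sumP_comm (τ : Equiv.Perm (Fin 3)) :
    permMat3 τ * (∑ σ : Equiv.Perm (Fin 3), permMat3 σ)
      = (∑ σ : Equiv.Perm (Fin 3), permMat3 σ) * permMat3 τ := by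
  rw [Finset.mul_sum, Finset.sum_mul]
  refine Fintype.sum_bijective (fun σ => τ * σ * τ⁻¹) (MulAut.conj τ).bijective _ _ fun σ => ?_
  rw [perm_mul_perm, perm_mul_perm]
  congr 1
  group

lemma sumSgn_comm (τ : Equiv.Perm (Fin 3)) :
    permMat3 τ * (∑ σ : Equiv.Perm (Fin 3), ((Equiv.Perm.sign σ : ℤ) : ℂ) • permMat3 σ)
      = (∑ σ : Equiv.Perm (Fin 3), ((Equiv.Perm.sign σ : ℤ) : ℂ) • permMat3 σ) * permMat3 τ := by
  rw [Finset.mul_sum, Finset.sum_mul]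
  refine Fintype.sum_bijective (fun σ => τ * σ * τ⁻¹) (MulAut.conj τ).bijective _ _ fun σ => ?_
  rw [mul_smul_comm, smul_mul_assoc, perm_mul_perm, perm_mul_perm]
  have hs : Equiv.Perm.sign (τ * σ * τ⁻¹) = Equiv.Perm.sign σ := by
    simp only [_root_.map_mul, Equiv.Perm.sign_inv]
    rw [mul_comm, ← mul_assoc, Int.units_mul_self, one_mul]
  rw [hs]
  congr 2
  group

lemma lamProj_comm_perm (τ : Equiv.Perm (Fin 3)) :
    permMat3 τ * lamProj = lamProj * permMat3 τ := by
  unfold lamProj symProj3 antisymProj3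
  rw [mul_sub, sub_mul, mul_sub, sub_mul, mul_one, one_mul,
    mul_smul_comm, smul_mul_assoc, mul_smul_comm, smul_mul_assoc,
    sumP_comm, sumSgn_comm]

lemma lamProj_comm (A : Mat43) (h : ∀ τ, permMat3 τ * A = A * permMat3 τ) :
    lamProj * A = A * lamProj := by
  have h1 : (∑ σ : Equiv.Perm (Fin 3), permMat3 σ) * A
      = A * (∑ σ : Equiv.Perm (Fin 3), permMat3 σ) := by
    rw [Finset.sum_mul, Finset.mul_sum]
    exact Finset.sum_congr rfl fun σ _ => h σ
  have h2 : (∑ σ : Equiv.Perm (Fin 3), ((Equiv.Perm.sign σ : ℤ) : ℂ) • permMat3 σ) * A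
      = A * (∑ σ : Equiv.Perm (Fin 3), ((Equiv.Perm.sign σ : ℤ) : ℂ) • permMat3 σ) := by
    rw [Finset.sum_mul, Finset.mul_sum]
    refine Finset.sum_congr rfl fun σ _ => ?_
    rw [smul_mul_assoc, mul_smul_comm, h σ]
  unfold lamProj symProj3 antisymProj3
  rw [sub_mul, mul_sub, sub_mul, mul_sub, mul_one, one_mul,
    smul_mul_assoc, mul_smul_comm, smul_mul_assoc, mul_smul_comm, h1, h2]

lemma perm_tpow (σ : Equiv.Perm (Fin 3)) (U : Matrix (Fin 2 × Fin 2) (Fin 2 × Fin 2) ℂ) :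
    permMat3 σ * tpow3 U = tpow3 U * permMat3 σ := by
  rw [tpow3_eq_gop]
  exact perm_gop σ (fun _ => U)

lemma gopB_comm_kronV (g : Fin 3 → M2C) (V : M2C) :
    gopB g * tpow3 (kron22 V 1) = tpow3 (kron22 V 1) * gopB g := by
  rw [tpow3_eq_gop]
  unfold gopB
  rw [gop_mul_gop, gop_mul_gop]
  have : (fun i => kron22 1 (g i) * kron22 V 1) = fun i => kron22 V 1 * kron22 1 (g i) :=
    funext fun i => by rw [kron22_mul, kron22_mul, one_mul, mul_one, one_mul, mul_one]
  rw [this]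

lemma bperm_comm_kronW (σ : Equiv.Perm (Fin 3)) (W : M2C) :
    bperm σ * tpow3 (kron22 1 W) = tpow3 (kron22 1 W) * bperm σ := by
  have h : tpow3 (kron22 1 W) = gopB (fun _ => W) := rfl
  rw [h]
  exact bperm_gopB σ (fun _ => W)

lemma M_comm_kronV (V : M2C) :
    Mmat * tpow3 (kron22 V 1) = tpow3 (kron22 V 1) * Mmat := by
  unfold Mmat
  rw [Finset.sum_mul, Finset.mul_sum]
  refine Finset.sum_congr rfl fun σ _ => ?_
  rw [smul_mul_assoc, mul_smul_comm]
  congr 1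
  rw [mul_assoc, gopB_comm_kronV, ← mul_assoc, perm_tpow, mul_assoc]

lemma R_comm_kronW (W : M2C) :
    Rmat * tpow3 (kron22 1 W) = tpow3 (kron22 1 W) * Rmat := by
  unfold Rmat
  rw [Finset.sum_mul, Finset.mul_sum]
  exact Finset.sum_congr rfl fun σ _ => bperm_comm_kronW σ W

-- ### explicit enumeration of S₃
def t01 : Equiv.Perm (Fin 3) := Equiv.swap 0 1
def t02 : Equiv.Perm (Fin 3) := Equiv.swap 0 2
def t12 : Equiv.Perm (Fin 3) := Equiv.swap 1 2
def c3a : Equiv.Perm (Fin 3) := t01 * t12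
def c3b : Equiv.Perm (Fin 3) := t12 * t01

lemma perm3_univ :
    (Finset.univ : Finset (Equiv.Perm (Fin 3))) = {1, t01, t02, t12, c3a, c3b} := by
  symm
  apply Finset.eq_univ_of_card
  rw [show ({1, t01, t02, t12, c3a, c3b} : Finset (Equiv.Perm (Fin 3))).card = 6 by decide]
  rw [Fintype.card_perm, Fintype.card_fin]
  decide

lemma permSum {α : Type*} [AddCommMonoid α] (f : Equiv.Perm (Fin 3) → α) :
    ∑ σ : Equiv.Perm (Fin 3), f σ
      = f 1 + f t01 + f t02 + f t12 + f c3a + f c3b := by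
  rw [perm3_univ, Finset.sum_insert (by decide), Finset.sum_insert (by decide),
    Finset.sum_insert (by decide), Finset.sum_insert (by decide),
    Finset.sum_pair (by decide)]
  abel

lemma Mclosed : Mmat = permMat3 t01 * gopB (gg t01) + permMat3 t02 * gopB (gg t02)
    + permMat3 t12 * gopB (gg t12) := by
  unfold Mmat
  rw [permSum]
  rw [show cc 1 = 0 from if_neg (by decide), show cc t01 = 1 from if_pos (by decide),
    show cc t02 = 1 from if_pos (by decide), show cc t12 = 1 from if_pos (by decide),
    show cc c3a = 0 from if_neg (by decide), show cc c3b = 0 from if_neg (by decide)]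
  simp only [zero_smul, one_smul, zero_add, add_zero]

lemma Rclosed : Rmat = bperm 1 + bperm t01 + bperm t02 + bperm t12 + bperm c3a + bperm c3b :=
  permSum _

-- ### integer models
abbrev MatZ := Matrix IdxT IdxT ℤ

def permZ (σ : Equiv.Perm (Fin 3)) : MatZ :=
  Matrix.of fun x y => if x = y ∘ ⇑σ⁻¹ then 1 else 0

def bpermZ (σ : Equiv.Perm (Fin 3)) : MatZ :=
  Matrix.of fun x y => if x = bmap σ⁻¹ y then 1 else 0

def XZ : Matrix (Fin 2) (Fin 2) ℤ := !![0, 1; 0, 0]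

def ggZ (σ : Equiv.Perm (Fin 3)) : Fin 3 → Matrix (Fin 2) (Fin 2) ℤ :=
  fun k => if σ k = k then 1 else XZ

def mtZ (σ : Equiv.Perm (Fin 3)) : MatZ :=
  Matrix.of fun x y =>
    ∏ i, (if (x (σ i)).1 = (y i).1 then 1 else 0) * (ggZ σ i) ((x (σ i)).2) ((y i).2)

def MZ : MatZ := mtZ t01 + mtZ t02 + mtZ t12

def RZ : MatZ := bpermZ 1 + bpermZ t01 + bpermZ t02 + bpermZ t12 + bpermZ c3a + bpermZ c3b

def LZ : MatZ := (6 : ℤ) • 1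
  - (permZ 1 + permZ t01 + permZ t02 + permZ t12 + permZ c3a + permZ c3b)
  - (permZ 1 - permZ t01 - permZ t02 - permZ t12 + permZ c3a + permZ c3b)

def phiC : MatZ →+* Mat43 := (Int.castRingHom ℂ).mapMatrix

lemma phiC_apply (A : MatZ) (x y : IdxT) : phiC A x y = ((A x y : ℤ) : ℂ) := by
  simp [phiC, RingHom.mapMatrix_apply, Matrix.map_apply]

lemma phiC_permZ (σ : Equiv.Perm (Fin 3)) : phiC (permZ σ) = permMat3 σ := by
  ext x y
  rw [phiC_apply]
  simp [permZ, permMat3, apply_ite]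

lemma phiC_bpermZ (σ : Equiv.Perm (Fin 3)) : phiC (bpermZ σ) = bperm σ := by
  ext x y
  rw [phiC_apply]
  simp [bpermZ, bperm, apply_ite]

lemma ggZ_cast (σ : Equiv.Perm (Fin 3)) (i : Fin 3) (p q : Fin 2) :
    (((ggZ σ i) p q : ℤ) : ℂ) = (gg σ i) p q := by
  unfold gg ggZ
  split_ifs with h
  · simp [Matrix.one_apply, apply_ite]
  · unfold Xc XZ
    fin_cases p <;> fin_cases q <;> simp

lemma phiC_mtZ (σ : Equiv.Perm (Fin 3)) : phiC (mtZ σ) = permMat3 σ * gopB (gg σ) := by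
  rw [perm_mul]
  ext x y
  rw [phiC_apply]
  simp only [mtZ, gopB, gop, Matrix.of_apply, Function.comp_apply, kron22]
  push_cast
  refine Finset.prod_congr rfl fun i _ => ?_
  rw [ggZ_cast]
  simp [Matrix.one_apply]

lemma phiC_MZ : phiC MZ = Mmat := by
  rw [Mclosed]
  unfold MZ
  rw [map_add, map_add, phiC_mtZ, phiC_mtZ, phiC_mtZ]

lemma phiC_RZ : phiC RZ = Rmat := by
  rw [Rclosed]
  unfold RZ
  simp only [map_add, phiC_bpermZ]

lemma phiC_LZ : phiC LZ = (6 : ℂ) • lamProj := by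
  have hfact : ((Nat.factorial 3 : ℂ)) = 6 := by norm_num [Nat.factorial]
  have hsym : (6 : ℂ) • symProj3 = ∑ σ : Equiv.Perm (Fin 3), permMat3 σ := by
    unfold symProj3
    rw [smul_smul, hfact]
    norm_num
  have hanti : (6 : ℂ) • antisymProj3
      = ∑ σ : Equiv.Perm (Fin 3), ((Equiv.Perm.sign σ : ℤ) : ℂ) • permMat3 σ := by
    unfold antisymProj3
    rw [smul_smul, hfact]
    norm_num
  have h1 : phiC LZ = (6 : ℂ) • 1
      - (permMat3 1 + permMat3 t01 + permMat3 t02 + permMat3 t12 + permMat3 c3a + permMat3 c3b)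
      - (permMat3 1 - permMat3 t01 - permMat3 t02 - permMat3 t12 + permMat3 c3a
          + permMat3 c3b) := by
    unfold LZ
    simp only [map_sub, map_add, map_zsmul, _root_.map_one, phiC_permZ]
    congr 2
    rw [← Int.cast_smul_eq_zsmul ℂ]
    norm_num
  rw [h1]
  unfold lamProj
  rw [smul_sub, smul_sub, hsym, hanti, permSum (f := permMat3),
    permSum (f := fun σ => ((Equiv.Perm.sign σ : ℤ) : ℂ) • permMat3 σ)]
  rw [show ((Equiv.Perm.sign (1 : Equiv.Perm (Fin 3)) : ℤ) : ℂ) = 1 by norm_num,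
    show ((Equiv.Perm.sign t01 : ℤ) : ℂ) = -1 by rw [show Equiv.Perm.sign t01 = -1 by decide]; norm_num,
    show ((Equiv.Perm.sign t02 : ℤ) : ℂ) = -1 by rw [show Equiv.Perm.sign t02 = -1 by decide]; norm_num,
    show ((Equiv.Perm.sign t12 : ℤ) : ℂ) = -1 by rw [show Equiv.Perm.sign t12 = -1 by decide]; norm_num,
    show ((Equiv.Perm.sign c3a : ℤ) : ℂ) = 1 by rw [show Equiv.Perm.sign c3a = 1 by decide]; norm_num,
    show ((Equiv.Perm.sign c3b : ℤ) : ℂ) = 1 by rw [show Equiv.Perm.sign c3b = 1 by decide]; norm_num]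
  simp only [one_smul, neg_smul, ← sub_eq_add_neg]

-- ### concrete witness entries
def x0 : IdxT := ![((0 : Fin 2), (0 : Fin 2)), ((0 : Fin 2), (0 : Fin 2)), ((1 : Fin 2), (0 : Fin 2))]
def y0 : IdxT := ![((0 : Fin 2), (0 : Fin 2)), ((0 : Fin 2), (1 : Fin 2)), ((1 : Fin 2), (1 : Fin 2))]

/-- a sparse vector given by a list of (index, value) pairs -/
def dvec (l : List (IdxT × ℤ)) : IdxT → ℤ :=
  fun z => (l.map (fun p => if z = p.1 then p.2 else 0)).sum

lemma dvec_mulsum (l : List (IdxT × ℤ)) (f : IdxT → ℤ) :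
    ∑ z : IdxT, (dvec l z) * f z = (l.map (fun p => p.2 * f p.1)).sum := by
  induction l with
  | nil => simp [dvec]
  | cons p l ih =>
      simp only [dvec, List.map_cons, List.sum_cons] at *
      rw [show (∑ z : IdxT, ((if z = p.1 then p.2 else 0)
            + (List.map (fun q => if z = q.1 then q.2 else 0) l).sum) * f z)
          = (∑ z : IdxT, (if z = p.1 then p.2 else 0) * f z)
            + ∑ z : IdxT, (List.map (fun q => if z = q.1 then q.2 else 0) l).sum * f z from by
        rw [← Finset.sum_add_distrib]
        exact Finset.sum_congr rfl fun z _ => (add_mul _ _ _)]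
      rw [ih]
      congr 1
      simp [ite_mul]
def L1 : List (IdxT × ℤ) := [(![((0 : Fin 2), (0 : Fin 2)), ((0 : Fin 2), (0 : Fin 2)), ((1 : Fin 2), (0 : Fin 2))], (4 : ℤ)), (![((0 : Fin 2), (0 : Fin 2)), ((1 : Fin 2), (0 : Fin 2)), ((0 : Fin 2), (0 : Fin 2))], (-2 : ℤ)), (![((1 : Fin 2), (0 : Fin 2)), ((0 : Fin 2), (0 : Fin 2)), ((0 : Fin 2), (0 : Fin 2))], (-2 : ℤ))]

def L2 : List (IdxT × ℤ) := [(![((0 : Fin 2), (0 : Fin 2)), ((0 : Fin 2), (1 : Fin 2)), ((1 : Fin 2), (1 : Fin 2))], (-2 : ℤ)), (![((0 : Fin 2), (0 : Fin 2)), ((1 : Fin 2), (1 : Fin 2)), ((0 : Fin 2), (1 : Fin 2))], (4 : ℤ)), (![((0 : Fin 2), (1 : Fin 2)), ((0 : Fin 2), (0 : Fin 2)), ((1 : Fin 2), (1 : Fin 2))], (-2 : ℤ)), (![((0 : Fin 2), (1 : Fin 2)), ((0 : Fin 2), (1 : Fin 2)), ((1 : Fin 2), (0 : Fin 2))], (4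 : ℤ)), (![((0 : Fin 2), (1 : Fin 2)), ((1 : Fin 2), (0 : Fin 2)), ((0 : Fin 2), (1 : Fin 2))], (-2 : ℤ)), (![((0 : Fin 2), (1 : Fin 2)), ((1 : Fin 2), (1 : Fin 2)), ((0 : Fin 2), (0 : Fin 2))], (-2 : ℤ)), (![((1 : Fin 2), (0 : Fin 2)), ((0 : Fin 2), (1 : Fin 2)), ((0 : Fin 2), (1 : Fin 2))], (-2 : ℤ)), (![((1 : Fin 2), (1 : Fin 2)), ((0 : Fin 2), (0 : Fin 2)), ((0 : Fin 2), (1 : Fin 2))], (4 : ℤ)), (![((1 : Fin 2), (1 : Fin 2)), ((0 : Fin 2), (1 : Fin 2)), ((0 : Fin 2), (0 : Fin 2))], (-2 : ℤ))]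

def L3 : List (IdxT × ℤ) := [(![((0 : Fin 2), (0 : Fin 2)), ((0 : Fin 2), (1 : Fin 2)), ((1 : Fin 2), (1 : Fin 2))], (-12 : ℤ)), (![((0 : Fin 2), (0 : Fin 2)), ((1 : Fin 2), (1 : Fin 2)), ((0 : Fin 2), (1 : Fin 2))], (24 : ℤ)), (![((0 : Fin 2), (1 : Fin 2)), ((0 : Fin 2), (0 : Fin 2)), ((1 : Fin 2), (1 : Fin 2))], (-12 : ℤ)), (![((0 : Fin 2), (1 : Fin 2)), ((0 : Fin 2), (1 : Fin 2)), ((1 : Fin 2), (0 : Fin 2))], (24 : ℤ)), (![((0 : Fin 2), (1 : Fin 2)), ((1 : Fin 2), (0 : Fin 2)), ((0 : Fin 2), (1 : Fin 2))], (-12 : ℤ)), (![((0 : Fin 2), (1 : Fin 2)), ((1 : Fin 2), (1 : Fin 2)), ((0 : Fin 2), (0 : Fin 2))], (-12 : ℤ)), (![((1 : Fin 2), (0 : Fin 2)), ((0 : Fin 2), (1 : Fin 2)), ((0 : Fin 2), (1 : Fin 2))], (-12 : ℤ)), (![((1 : Fin 2), (1 : Fin 2)), ((0 : Fin 2), (0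 : Fin 2)), ((0 : Fin 2), (1 : Fin 2))], (24 : ℤ)), (![((1 : Fin 2), (1 : Fin 2)), ((0 : Fin 2), (1 : Fin 2)), ((0 : Fin 2), (0 : Fin 2))], (-12 : ℤ))]

def R1 : List (IdxT × ℤ) := [(![((0 : Fin 2), (0 : Fin 2)), ((0 : Fin 2), (0 : Fin 2)), ((1 : Fin 2), (0 : Fin 2))], (6 : ℤ))]

def R2 : List (IdxT × ℤ) := [(![((0 : Fin 2), (0 : Fin 2)), ((0 : Fin 2), (0 : Fin 2)), ((1 : Fin 2), (0 : Fin 2))], (24 : ℤ)), (![((0 : Fin 2), (0 : Fin 2)), ((1 : Fin 2), (0 : Fin 2)), ((0 : Fin 2), (0 : Fin 2))], (-12 : ℤ)), (![((1 : Fin 2), (0 : Fin 2)), ((0 : Fin 2), (0 : Fin 2)), ((0 : Fin 2), (0 : Fin 2))], (-12 : ℤ))]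

def R3 : List (IdxT × ℤ) := [(![((0 : Fin 2), (0 : Fin 2)), ((0 : Fin 2), (1 : Fin 2)), ((1 : Fin 2), (1 : Fin 2))], (-12 : ℤ)), (![((0 : Fin 2), (0 : Fin 2)), ((1 : Fin 2), (1 : Fin 2)), ((0 : Fin 2), (1 : Fin 2))], (24 : ℤ)), (![((0 : Fin 2), (1 : Fin 2)), ((0 : Fin 2), (0 : Fin 2)), ((1 : Fin 2), (1 : Fin 2))], (-12 : ℤ)), (![((0 : Fin 2), (1 : Fin 2)), ((0 : Fin 2), (1 : Fin 2)), ((1 : Fin 2), (0 : Fin 2))], (24 : ℤ)), (![((0 : Fin 2), (1 : Fin 2)), ((1 : Fin 2), (0 : Fin 2)), ((0 : Fin 2), (1 : Fin 2))], (-12 : ℤ)), (![((0 : Fin 2), (1 : Fin 2)), ((1 : Fin 2), (1 : Fin 2)), ((0 : Fin 2), (0 : Fin 2))], (-12 : ℤ)), (![((1 : Fin 2), (0 : Fin 2)), ((0 : Fin 2), (1 : Fin 2)), ((0 : Fin 2), (1 : Fin 2))], (-12 : ℤ)), (![((1 : Fin 2), (1 : Fin 2)), ((0 : Fin 2), (0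 : Fin 2)), ((0 : Fin 2), (1 : Fin 2))], (24 : ℤ)), (![((1 : Fin 2), (1 : Fin 2)), ((0 : Fin 2), (1 : Fin 2)), ((0 : Fin 2), (0 : Fin 2))], (-12 : ℤ))]

set_option maxRecDepth 40000 in
lemma st1 : ∀ z : IdxT, LZ x0 z = dvec L1 z := by decide

set_option maxRecDepth 40000 in
set_option maxHeartbeats 4000000 in
lemma st2 : ∀ z : IdxT, (L1.map (fun p => p.2 * MZ p.1 z)).sum = dvec L2 z := by decide

set_option maxRecDepth 40000 in
set_option maxHeartbeats 4000000 in
lemma st3 : ∀ z : IdxT, (L2.map (fun p => p.2 * LZ p.1 z)).sum = dvec L3 z := by decide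

set_option maxRecDepth 40000 in
lemma st4 : (L3.map (fun p => p.2 * RZ p.1 y0)).sum = 0 := by decide

set_option maxRecDepth 40000 in
lemma sw1 : ∀ z : IdxT, RZ x0 z = dvec R1 z := by decide

set_option maxRecDepth 40000 in
lemma sw2 : ∀ z : IdxT, (R1.map (fun p => p.2 * LZ p.1 z)).sum = dvec R2 z := by decide

set_option maxRecDepth 40000 in
set_option maxHeartbeats 4000000 in
lemma sw3 : ∀ z : IdxT, (R2.map (fun p => p.2 * MZ p.1 z)).sum = dvec R3 z := by decide

set_option maxRecDepth 40000 in
lemma sw4 : (R3.map (fun p => p.2 * LZ p.1 y0)).sum = -72 := by decide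

lemma entryL : (LZ * MZ * LZ * RZ) x0 y0 = 0 := by
  have e2 : ∀ w, (LZ * MZ) x0 w = dvec L2 w := fun w => by
    rw [Matrix.mul_apply]
    simp_rw [st1]
    rw [dvec_mulsum]
    exact st2 w
  have e3 : ∀ w, (LZ * MZ * LZ) x0 w = dvec L3 w := fun w => by
    rw [Matrix.mul_apply]
    simp_rw [e2]
    rw [dvec_mulsum]
    exact st3 w
  rw [Matrix.mul_apply]
  simp_rw [e3]
  rw [dvec_mulsum]
  exact st4

lemma entryR : (((RZ * LZ) * MZ) * LZ) x0 y0 = -72 := by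
  have f2 : ∀ w, (RZ * LZ) x0 w = dvec R2 w := fun w => by
    rw [Matrix.mul_apply]
    simp_rw [sw1]
    rw [dvec_mulsum]
    exact sw2 w
  have f3 : ∀ w, ((RZ * LZ) * MZ) x0 w = dvec R3 w := fun w => by
    rw [Matrix.mul_apply]
    simp_rw [f2]
    rw [dvec_mulsum]
    exact sw3 w
  rw [Matrix.mul_apply]
  simp_rw [f3]
  rw [dvec_mulsum]
  exact sw4


lemma entryR' : (RZ * (LZ * MZ * LZ)) x0 y0 = -72 := by
  rw [show RZ * (LZ * MZ * LZ) = ((RZ * LZ) * MZ) * LZ from by rw [← mul_assoc, ← mul_assoc]]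
  exact entryR

lemma comm_sandwich {A B : Mat43} (h1 : B * lamProj = lamProj * B) (h2 : B * A = A * B) :
    (lamProj * A * lamProj) * B = B * (lamProj * A * lamProj) := by
  calc (lamProj * A * lamProj) * B
      = lamProj * A * (lamProj * B) := by rw [mul_assoc]
    _ = lamProj * A * (B * lamProj) := by rw [← h1]
    _ = lamProj * (A * B) * lamProj := by
        rw [← mul_assoc, mul_assoc lamProj A B]
    _ = lamProj * (B * A) * lamProj := by rw [← h2]
    _ = lamProj * B * (A * lamProj) := by
        rw [← mul_assoc lamProj B A, mul_assoc]
    _ = B * lamProj * (A * lamProj) := by rw [← h1]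
    _ = B * (lamProj * A * lamProj) := by rw [mul_assoc, ← mul_assoc lamProj A lamProj]


theorem lambda_subspace_duality_fails :
    ∃ M : Mat43,
      (∀ σ : Equiv.Perm (Fin 3),
        (lamProj * M * lamProj) * permMat3 σ = permMat3 σ * (lamProj * M * lamProj)) ∧
      (∀ V : Matrix (Fin 2) (Fin 2) ℂ, V ∈ Matrix.unitaryGroup (Fin 2) ℂ →
        (lamProj * M * lamProj) * tpow3 (kron22 V 1)
          = tpow3 (kron22 V 1) * (lamProj * M * lamProj)) ∧
      (lamProj * M * lamProj) ∉ NonUnitalAlgebra.adjoin ℂ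
        {Y : Mat43 | ∃ W ∈ Matrix.unitaryGroup (Fin 2) ℂ,
          Y = lamProj * tpow3 (kron22 1 W) * lamProj} := by
  refine ⟨Mmat, fun σ => ?_, fun V _ => ?_, ?_⟩
  · exact comm_sandwich (lamProj_comm_perm σ) (M_comm_perm σ)
  · exact comm_sandwich ((lamProj_comm _ (fun τ => perm_tpow τ _)).symm)
      ((M_comm_kronV V).symm)
  · intro hmem
    have hsub : {Y : Mat43 | ∃ W ∈ Matrix.unitaryGroup (Fin 2) ℂ,
        Y = lamProj * tpow3 (kron22 1 W) * lamProj}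
        ⊆ (NonUnitalSubalgebra.centralizer ℂ {Rmat} : Set Mat43) := by
      rintro Y ⟨W, _, rfl⟩
      rw [SetLike.mem_coe, NonUnitalSubalgebra.mem_centralizer_iff]
      rintro g hg
      rw [Set.mem_singleton_iff] at hg
      subst hg
      exact (comm_sandwich ((lamProj_comm Rmat R_comm_perm).symm)
        (R_comm_kronW W)).symm
    have hZ := NonUnitalAlgebra.adjoin_le hsub hmem
    rw [NonUnitalSubalgebra.mem_centralizer_iff] at hZ
    have hcomm : Rmat * (lamProj * Mmat * lamProj) = (lamProj * Mmat * lamProj) * Rmat :=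
      hZ Rmat (Set.mem_singleton _)
    have hlam : lamProj = (6 : ℂ)⁻¹ • phiC LZ := by
      rw [phiC_LZ, smul_smul]
      norm_num
    have hL : (lamProj * Mmat * lamProj) * Rmat
        = (36 : ℂ)⁻¹ • phiC (LZ * MZ * LZ * RZ) := by
      rw [hlam, ← phiC_MZ, ← phiC_RZ]
      simp only [smul_mul_assoc, mul_smul_comm, smul_smul, ← _root_.map_mul]
      norm_num
    have hR : Rmat * (lamProj * Mmat * lamProj)
        = (36 : ℂ)⁻¹ • phiC (RZ * (LZ * MZ * LZ)) := by
      rw [hlam, ← phiC_MZ, ← phiC_RZ]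
      simp only [smul_mul_assoc, mul_smul_comm, smul_smul, ← _root_.map_mul]
      norm_num
    rw [hL, hR] at hcomm
    have hφ : phiC (RZ * (LZ * MZ * LZ)) = phiC (LZ * MZ * LZ * RZ) :=
      smul_right_injective Mat43 (by norm_num : (36 : ℂ)⁻¹ ≠ 0) hcomm
    have hent : phiC (RZ * (LZ * MZ * LZ)) x0 y0 = phiC (LZ * MZ * LZ * RZ) x0 y0 := by
      rw [hφ]
    rw [phiC_apply, phiC_apply] at hent
    have hZent : (RZ * (LZ * MZ * LZ)) x0 y0 = (LZ * MZ * LZ * RZ) x0 y0 := by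
      exact_mod_cast hent
    rw [entryL, entryR'] at hZent
    norm_num at hZent
end
end
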